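/- arXiv:1410.1007 — 2 statements merged into one kernel-verified Lean document; each statement's English description precedes it below -/
import Mathlib

section
/- Let n ≥ 2 be an integer and let E be an arbitrary non-empty subset of Δ̄^(n). There exists a generalized n-system P on [1, ∞) such that, for each j = 1, …, n, liminf_{q→∞} ψ_j(q^{−1}P(q)) = inf ψ_j(E) and limsup_{q→∞} ψ_j(q^{−1}P(q)) = j/n. -/
noncomputable section

/-- `D` is a discrete subset of `I`: every point of `I` has a neighbourhood
meeting `D` in at most itself. -/
def DiscreteIn (D I : Set ℝ) : Prop :=
  D ⊆ I ∧ ∀ q ∈ I, ∃ ε > (0 : ℝ), D ∩ Set.Ioo (q - ε) (q + ε) ⊆ {q}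

/-- The set of points of `I` at which `P` is not differentiable, including the
boundary points of `I` that lie in `I`. -/
def NonDiffSet (n : ℕ) (I : Set ℝ) (P : ℝ → Fin n → ℝ) : Set ℝ :=
  {q ∈ I | q ∈ frontier I ∨ ¬DifferentiableAt ℝ P q}

/-- `P` is continuous piecewise linear on `I`: it is continuous on `I`, the set `D`
of points of `I` at which it is not differentiable (including boundary points of `I`
lying in `I`) is a discrete subset of `I`, and its derivative is locally constant
on `I \ D`. -/
def ContPiecewiseLinearOn (n : ℕ) (I : Set ℝ) (P : ℝ → Fin n → ℝ) : Prop :=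
  ContinuousOn P I ∧
  DiscreteIn (NonDiffSet n I P) I ∧
  ∀ q ∈ I \ NonDiffSet n I P, ∃ ε > (0 : ℝ),
    ∀ x ∈ (I \ NonDiffSet n I P) ∩ Set.Ioo (q - ε) (q + ε), deriv P x = deriv P q

/-- An `n`-system on `I` (Definition 4.1): conditions (S1), (S2), (S3). -/
def IsNSystem (n : ℕ) (I : Set ℝ) (P : ℝ → Fin n → ℝ) : Prop :=
  ContPiecewiseLinearOn n I P ∧
  -- (S1)
  (∀ q ∈ I, ((∀ i, 0 ≤ P q i) ∧ Monotone (P q)) ∧ ∑ i, P q i = q) ∧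
  -- (S2)
  (∀ a b : ℝ, a < b → Set.Ioo a b ⊆ I →
    (∀ q ∈ Set.Ioo a b, DifferentiableAt ℝ P q) →
    ∃ r : Fin n, (∀ q ∈ Set.Ioo a b, deriv (fun x => P x r) q = 1) ∧
      ∀ j : Fin n, j ≠ r → ∀ p ∈ Set.Ioo a b, ∀ q ∈ Set.Ioo a b, P p j = P q j) ∧
  -- (S3)
  (∀ q ∈ interior I, ¬DifferentiableAt ℝ P q →
    ∀ r s : Fin n, derivWithin (fun x => P x r) (Set.Iic q) q = 1 →
      derivWithin (fun x => P x s) (Set.Ici q) q = 1 → r < s →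
      ∀ i : Fin n, r ≤ i → i ≤ s → P q i = P q r)

/-- A generalized `n`-system on `I` (Definition 4.4): conditions (G1), (G2), (G3). -/
def IsGenNSystem (n : ℕ) (I : Set ℝ) (P : ℝ → Fin n → ℝ) : Prop :=
  ContPiecewiseLinearOn n I P ∧
  -- (G1)
  (∀ q ∈ I, ((∀ i, 0 ≤ P q i) ∧ Monotone (P q)) ∧ ∑ i, P q i = q) ∧
  -- (G2)
  (∀ a b : ℝ, a < b → Set.Ioo a b ⊆ I →
    (∀ q ∈ Set.Ioo a b, DifferentiableAt ℝ P q) →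
    ∃ rlo rhi : Fin n, rlo ≤ rhi ∧
      (∀ j : Fin n, rlo ≤ j → j ≤ rhi → ∀ q ∈ Set.Ioo a b,
        P q j = P q rlo ∧
        deriv (fun x => P x j) q = 1 / (((rhi : ℕ) : ℝ) - ((rlo : ℕ) : ℝ) + 1)) ∧
      (∀ j : Fin n, j < rlo ∨ rhi < j →
        ∀ p ∈ Set.Ioo a b, ∀ q ∈ Set.Ioo a b, P p j = P q j)) ∧
  -- (G3)
  (∀ q ∈ interior I, ¬DifferentiableAt ℝ P q →
    ∀ rlo rhi slo shi : Fin n, rlo ≤ rhi → slo ≤ shi →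
      (∀ j : Fin n, rlo ≤ j → j ≤ rhi →
        derivWithin (fun x => P x j) (Set.Iic q) q
          = 1 / (((rhi : ℕ) : ℝ) - ((rlo : ℕ) : ℝ) + 1)) →
      (∀ j : Fin n, slo ≤ j → j ≤ shi →
        derivWithin (fun x => P x j) (Set.Ici q) q
          = 1 / (((shi : ℕ) : ℝ) - ((slo : ℕ) : ℝ) + 1)) →
      rlo < shi →
      ∀ i : Fin n, rlo ≤ i → i ≤ shi → P q i = P q rlo)

/-- `ψ_j(a) = a₁ + ⋯ + a_j` (sum of the first `j` coordinates). -/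
def psiSum (m j : ℕ) (x : Fin m → ℝ) : ℝ := ∑ i : Fin m, if (i : ℕ) < j then x i else 0

/-- The closed simplex `Δ̄⁽ᵐ⁾ = {a : 0 ≤ a₁ ≤ ⋯ ≤ a_m, a₁ + ⋯ + a_m = 1}`. -/
def DeltaBar (m : ℕ) : Set (Fin m → ℝ) :=
  {a | (∀ i, 0 ≤ a i) ∧ Monotone a ∧ ∑ i, a i = 1}

/-- The open simplex `Δ⁽ᵐ⁾ = {a : 0 < a₁ < ⋯ < a_m, a₁ + ⋯ + a_m = 1}`. -/
def DeltaStrict (m : ℕ) : Set (Fin m → ℝ) :=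
  {a | (∀ i, 0 < a i) ∧ StrictMono a ∧ ∑ i, a i = 1}

-- ===== Part A : abstract segment systems =====
namespace PropAux
open Filter Set


/-- slope vector of segment `i` determined by the block `[lo i, hi i]`. -/
def sl (lo hi : ℕ → ℕ) (i : ℕ) {n : ℕ} (p : Fin n) : ℝ :=
  if lo i ≤ (p : ℕ) ∧ (p : ℕ) ≤ hi i then 1 / (((hi i - lo i : ℕ) : ℝ) + 1) else 0


-- ===== psiSum helpers =====
lemma psiSum_div (n j : ℕ) (x : Fin n → ℝ) (q : ℝ) :
    psiSum n j (fun p => x p / q) = psiSum n j x / q := by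
  unfold psiSum
  rw [Finset.sum_div]
  apply Finset.sum_congr rfl
  intro p _
  split
  · rfl
  · rw [zero_div]

lemma psiSum_nonneg (n j : ℕ) (x : Fin n → ℝ) (hx : ∀ p, 0 ≤ x p) : 0 ≤ psiSum n j x := by
  apply Finset.sum_nonneg
  intro p _
  split
  · exact hx p
  · exact le_refl _

lemma psiSum_le_total (n j : ℕ) (x : Fin n → ℝ) (hx : ∀ p, 0 ≤ x p) :
    psiSum n j x ≤ ∑ p, x p := by
  apply Finset.sum_le_sum
  intro p _
  split
  · exact le_refl _
  · exact hx p

lemma psiSum_add (n j : ℕ) (x y : Fin n → ℝ) :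
    psiSum n j (fun p => x p + y p) = psiSum n j x + psiSum n j y := by
  unfold psiSum
  rw [← Finset.sum_add_distrib]
  apply Finset.sum_congr rfl
  intro p _
  split
  · rfl
  · rw [add_zero]

lemma psiSum_smul (n j : ℕ) (r : ℝ) (x : Fin n → ℝ) :
    psiSum n j (fun p => r * x p) = r * psiSum n j x := by
  unfold psiSum
  rw [Finset.mul_sum]
  apply Finset.sum_congr rfl
  intro p _
  split
  · rfl
  · rw [mul_zero]

lemma psiSum_congr (n j : ℕ) {x y : Fin n → ℝ} (h : ∀ p, x p = y p) :
    psiSum n j x = psiSum n j y := by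
  unfold psiSum
  exact Finset.sum_congr rfl (fun p _ => by rw [h p])

lemma psiSum_range (n j : ℕ) (f : ℕ → ℝ) (hj : j ≤ n) :
    psiSum n j (fun p => f (p:ℕ)) = ∑ k ∈ Finset.range j, f k := by
  unfold psiSum
  rw [Fin.sum_univ_eq_sum_range (fun k => if k < j then f k else 0) n]
  rw [← Finset.sum_range_add_sum_Ico _ hj]
  have h2 : ∑ k ∈ Finset.Ico j n, (if k < j then f k else 0) = 0 :=
    Finset.sum_eq_zero (fun k hk => if_neg (by have := (Finset.mem_Ico.1 hk).1; omega))
  rw [h2, add_zero]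
  exact Finset.sum_congr rfl (fun k hk => if_pos (Finset.mem_range.1 hk))

lemma psiSum_const (n j : ℕ) (hj : j ≤ n) (a : ℝ) :
    psiSum n j (fun _ => a) = j * a := by
  have := psiSum_range n j (fun _ => a) hj
  rw [this, Finset.sum_const, Finset.card_range, nsmul_eq_mul]

lemma psiSum_thr_le (n j t : ℕ) (hj : j ≤ n) (hjt : j ≤ t) (a b : ℝ) :
    psiSum n j (fun p => if (p:ℕ) < t then a else b) = j * a := by
  rw [psiSum_range n j (fun k => if k < t then a else b) hj]
  rw [Finset.sum_congr rfl (fun k hk => if_pos (by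
    have := Finset.mem_range.1 hk; omega))]
  rw [Finset.sum_const, Finset.card_range, nsmul_eq_mul]

lemma psiSum_thr_ge (n j t : ℕ) (hj : j ≤ n) (htj : t ≤ j) (a b : ℝ) :
    psiSum n j (fun p => if (p:ℕ) < t then a else b)
      = t * a + ((j:ℝ) - t) * b := by
  rw [psiSum_range n j (fun k => if k < t then a else b) hj]
  rw [← Finset.sum_range_add_sum_Ico _ htj]
  have h1 : ∑ k ∈ Finset.range t, (if k < t then a else b) = (t:ℝ) * a := by
    rw [Finset.sum_congr rfl (fun k hk => if_pos (Finset.mem_range.1 hk)),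
      Finset.sum_const, Finset.card_range, nsmul_eq_mul]
  have h2 : ∑ k ∈ Finset.Ico t j, (if k < t then a else b) = ((j:ℝ) - t) * b := by
    rw [Finset.sum_congr rfl (fun k hk => if_neg (by
      have := (Finset.mem_Ico.1 hk).1; omega)),
      Finset.sum_const, Nat.card_Ico, nsmul_eq_mul, Nat.cast_sub htj]
  rw [h1, h2]

lemma affine_le_of_endpoints {A B C a b q : ℝ} (ha : a ≤ q) (hb : q ≤ b)
    (h1 : C * a ≤ A + B * a) (h2 : C * b ≤ A + B * b) : C * q ≤ A + B * q := by
  rcases eq_or_lt_of_le (le_trans ha hb) with hab | hab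
  · have haq : a = q := le_antisymm ha (hab ▸ hb)
    rw [← haq]
    exact h1
  · have key : 0 ≤ (b - q) * (A + B*a - C*a) + (q - a) * (A + B*b - C*b) :=
      add_nonneg (mul_nonneg (by linarith) (by linarith)) (mul_nonneg (by linarith) (by linarith))
    have expand : (b - q) * (A + B*a - C*a) + (q - a) * (A + B*b - C*b)
        = (b - a) * (A + B*q - C*q) := by ring
    rw [expand] at key
    nlinarith [key, hab]


structure SegData (n : ℕ) where
  tau : ℕ → ℝ
  lo : ℕ → ℕ
  hi : ℕ → ℕ
  c : ℕ → Fin n → ℝ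
  lo_le_hi : ∀ i, lo i ≤ hi i
  hi_lt : ∀ i, hi i < n
  smono : StrictMono tau
  tau0 : tau 0 = 1
  tends : Tendsto tau atTop atTop
  sumc : ∀ i, ∑ p, c i p = tau i
  nonneg0 : ∀ p, 0 ≤ c 0 p
  monoc : ∀ i, Monotone (c i)
  crec : ∀ i p, c (i+1) p = c i p + (tau (i+1) - tau i) * sl lo hi i p
  eqblock : ∀ i (p r : Fin n), lo i ≤ (p:ℕ) → (p:ℕ) ≤ hi i → (r:ℕ) = lo i → c i p = c i r
  g3c : ∀ i (p r : Fin n), lo i < hi (i+1) → lo i ≤ (p:ℕ) → (p:ℕ) ≤ hi (i+1) → (r:ℕ) = lo i →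
      c (i+1) p = c (i+1) r

namespace SegData

variable {n : ℕ} (S : SegData n)

/-- slope vector -/
def slp (i : ℕ) : Fin n → ℝ := fun p => sl S.lo S.hi i p

lemma slp_def (i : ℕ) (p : Fin n) :
    S.slp i p = if S.lo i ≤ (p : ℕ) ∧ (p : ℕ) ≤ S.hi i
      then 1 / (((S.hi i - S.lo i : ℕ) : ℝ) + 1) else 0 := rfl

lemma slp_nonneg (i : ℕ) (p : Fin n) : 0 ≤ S.slp i p := by
  rw [slp_def]; split
  · positivity
  · exact le_refl _

lemma slp_ne_iff (i : ℕ) (p : Fin n) :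
    S.slp i p ≠ 0 ↔ (S.lo i ≤ (p : ℕ) ∧ (p : ℕ) ≤ S.hi i) := by
  rw [slp_def]
  split
  case isTrue h =>
    have : (0:ℝ) < 1 / (((S.hi i - S.lo i : ℕ) : ℝ) + 1) := by positivity
    exact ⟨fun _ => h, fun _ => ne_of_gt this⟩
  case isFalse h => simp [h]

lemma slp_eq_of_mem (i : ℕ) (p : Fin n) (h1 : S.lo i ≤ (p : ℕ)) (h2 : (p : ℕ) ≤ S.hi i) :
    S.slp i p = 1 / (((S.hi i - S.lo i : ℕ) : ℝ) + 1) := by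
  rw [slp_def, if_pos ⟨h1, h2⟩]

lemma slp_eq_zero (i : ℕ) (p : Fin n) (h : ¬(S.lo i ≤ (p : ℕ) ∧ (p : ℕ) ≤ S.hi i)) :
    S.slp i p = 0 := by rw [slp_def, if_neg h]

lemma one_le_tau (i : ℕ) : 1 ≤ S.tau i := S.tau0 ▸ S.smono.monotone (Nat.zero_le i)

lemma tau_pos (i : ℕ) : 0 < S.tau i := lt_of_lt_of_le one_pos (S.one_le_tau i)

lemma dtau_pos (i : ℕ) : 0 < S.tau (i+1) - S.tau i := by
  have := S.smono (Nat.lt_succ_self i); linarith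

lemma slp_sum (i : ℕ) : ∑ p, S.slp i p = 1 := by
  have h1 := S.sumc i
  have h2 := S.sumc (i+1)
  have h3 : ∑ p, S.c (i+1) p = ∑ p, (S.c i p + (S.tau (i+1) - S.tau i) * S.slp i p) :=
    Finset.sum_congr rfl fun p _ => S.crec i p
  rw [Finset.sum_add_distrib, ← Finset.mul_sum, h1, h2] at h3
  have hd := S.dtau_pos i
  have : (S.tau (i+1) - S.tau i) * ∑ p, S.slp i p = (S.tau (i+1) - S.tau i) * 1 := by
    rw [mul_one]; linarith
  exact mul_left_cancel₀ (ne_of_gt hd) this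

lemma c_le_succ (i : ℕ) (p : Fin n) : S.c i p ≤ S.c (i+1) p := by
  rw [S.crec i p]
  have hr : sl S.lo S.hi i p = S.slp i p := rfl
  rw [hr]
  have h1 := S.slp_nonneg i p
  have h2 := S.dtau_pos i
  nlinarith [mul_nonneg h2.le h1]

lemma c_mono_idx {i i' : ℕ} (h : i ≤ i') (p : Fin n) : S.c i p ≤ S.c i' p := by
  induction i' with
  | zero => simp_all
  | succ k ih =>
    rcases Nat.lt_or_ge i (k+1) with h' | h'
    · exact le_trans (ih (by omega)) (S.c_le_succ k p)
    · have : i = k + 1 := le_antisymm h h'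
      simp [this]

lemma c_nonneg (i : ℕ) (p : Fin n) : 0 ≤ S.c i p :=
  le_trans (S.nonneg0 p) (S.c_mono_idx (Nat.zero_le i) p)

lemma exists_lt (q : ℝ) : ∃ i, max 1 q < S.tau (i+1) := by
  obtain ⟨i, hi⟩ := (S.tends.eventually_gt_atTop (max 1 q)).exists
  exact ⟨i, lt_of_lt_of_le hi (S.smono.monotone (Nat.le_succ i))⟩

/-- index of the segment containing `q` (clamped at 1). -/
def idx (q : ℝ) : ℕ := Nat.find (S.exists_lt q)

lemma lt_tau_idx_succ (q : ℝ) : max 1 q < S.tau (S.idx q + 1) := Nat.find_spec (S.exists_lt q)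

lemma tau_idx_le (q : ℝ) : S.tau (S.idx q) ≤ max 1 q := by
  rcases h : S.idx q with _ | k
  · rw [S.tau0]; exact le_max_left _ _
  · have := Nat.find_min (S.exists_lt q) (show k < S.idx q by omega)
    push_neg at this
    exact this

lemma idx_eq {i : ℕ} {q : ℝ} (h1 : S.tau i ≤ q) (h2 : q < S.tau (i+1)) : S.idx q = i := by
  have hq1 : (1:ℝ) ≤ q := le_trans (S.one_le_tau i) h1
  have hmax : max 1 q = q := max_eq_right hq1
  rw [idx, Nat.find_eq_iff]
  constructor
  · rwa [hmax]
  · intro k hk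
    rw [hmax]
    push_neg
    exact le_trans (S.smono.monotone (by omega)) h1

/-- The generalized system. -/
def P : ℝ → Fin n → ℝ := fun q p =>
  S.c (S.idx q) p + (max 1 q - S.tau (S.idx q)) * S.slp (S.idx q) p

lemma P_eq_on (i : ℕ) {q : ℝ} (h1 : S.tau i ≤ q) (h2 : q ≤ S.tau (i+1)) (p : Fin n) :
    S.P q p = S.c i p + (q - S.tau i) * S.slp i p := by
  have hq1 : (1:ℝ) ≤ q := le_trans (S.one_le_tau i) h1
  rcases lt_or_eq_of_le h2 with h | h
  · rw [P, S.idx_eq h1 h, max_eq_right hq1]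
  · have hidx : S.idx q = i + 1 := S.idx_eq (le_of_eq h.symm) (h ▸ S.smono (by omega))
    have hr : sl S.lo S.hi i p = S.slp i p := rfl
    rw [P, hidx, max_eq_right hq1, ← h, sub_self, zero_mul, add_zero, S.crec i p, h, hr]

lemma P_tau (i : ℕ) : S.P (S.tau i) = S.c i := by
  funext p
  rw [S.P_eq_on i (le_refl _) (S.smono (Nat.lt_succ_self i)).le p, sub_self, zero_mul, add_zero]

lemma P_low {q : ℝ} (h : q ≤ 1) : S.P q = S.c 0 := by
  have hmax : max 1 q = 1 := max_eq_left h
  have hidx : S.idx q = 0 := by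
    rw [idx, Nat.find_eq_zero]
    rw [hmax, ← S.tau0]
    exact S.smono (by omega)
  funext p
  rw [P, hidx, hmax, S.tau0, sub_self, zero_mul, add_zero]


/-- the affine model of segment `i`. -/
def aff (i : ℕ) : ℝ → Fin n → ℝ := fun x p => S.c i p + (x - S.tau i) * S.slp i p

lemma aff_hasDerivAt_comp (i : ℕ) (p : Fin n) (x : ℝ) :
    HasDerivAt (fun y => S.aff i y p) (S.slp i p) x := by
  have h : HasDerivAt (fun y : ℝ => S.c i p + (y - S.tau i) * S.slp i p)
      (1 * S.slp i p) x :=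
    (((hasDerivAt_id x).sub_const (S.tau i)).mul_const (S.slp i p)).const_add (S.c i p)
  rw [one_mul] at h
  exact h

lemma aff_hasDerivAt (i : ℕ) (x : ℝ) : HasDerivAt (S.aff i) (S.slp i) x :=
  hasDerivAt_pi.2 fun p => S.aff_hasDerivAt_comp i p x

lemma ev_eq_aff {i : ℕ} {q : ℝ} (h1 : S.tau i < q) (h2 : q < S.tau (i+1)) :
    S.P =ᶠ[nhds q] S.aff i := by
  filter_upwards [Ioo_mem_nhds h1 h2] with x hx
  funext p
  exact S.P_eq_on i hx.1.le hx.2.le p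

lemma hasDerivAt_interior {i : ℕ} {q : ℝ} (h1 : S.tau i < q) (h2 : q < S.tau (i+1)) :
    HasDerivAt S.P (S.slp i) q :=
  (S.aff_hasDerivAt i q).congr_of_eventuallyEq (S.ev_eq_aff h1 h2)

lemma hasDerivAt_interior_comp {i : ℕ} {q : ℝ} (h1 : S.tau i < q) (h2 : q < S.tau (i+1))
    (p : Fin n) : HasDerivAt (fun x => S.P x p) (S.slp i p) q :=
  hasDerivAt_pi.1 (S.hasDerivAt_interior h1 h2) p

lemma ev_eq_aff_left (i : ℕ) :
    S.P =ᶠ[nhdsWithin (S.tau (i+1)) (Iic (S.tau (i+1)))] S.aff i := by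
  rw [Filter.eventuallyEq_iff_exists_mem]
  refine ⟨Iic (S.tau (i+1)) ∩ Ioi (S.tau i), ?_, ?_⟩
  · exact inter_mem_nhdsWithin _ (Ioi_mem_nhds (S.smono (Nat.lt_succ_self i)))
  · intro x hx
    funext p
    exact S.P_eq_on i hx.2.le hx.1 p

lemma ev_eq_aff_right (i : ℕ) :
    S.P =ᶠ[nhdsWithin (S.tau (i+1)) (Ici (S.tau (i+1)))] S.aff (i+1) := by
  rw [Filter.eventuallyEq_iff_exists_mem]
  refine ⟨Ici (S.tau (i+1)) ∩ Iio (S.tau (i+2)), ?_, ?_⟩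
  · exact inter_mem_nhdsWithin _ (Iio_mem_nhds (S.smono (Nat.lt_succ_self (i+1))))
  · intro x hx
    funext p
    exact S.P_eq_on (i+1) hx.1 hx.2.le p

lemma hasDerivWithinAt_left (i : ℕ) :
    HasDerivWithinAt S.P (S.slp i) (Iic (S.tau (i+1))) (S.tau (i+1)) := by
  refine HasDerivWithinAt.congr_of_eventuallyEq
    ((S.aff_hasDerivAt i (S.tau (i+1))).hasDerivWithinAt) (S.ev_eq_aff_left i) ?_
  rw [S.P_tau (i+1)]
  funext p
  rw [aff, S.crec i p]
  ring_nf
  rfl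

lemma hasDerivWithinAt_right (i : ℕ) :
    HasDerivWithinAt S.P (S.slp (i+1)) (Ici (S.tau (i+1))) (S.tau (i+1)) := by
  refine HasDerivWithinAt.congr_of_eventuallyEq
    ((S.aff_hasDerivAt (i+1) (S.tau (i+1))).hasDerivWithinAt) (S.ev_eq_aff_right i) ?_
  rw [S.P_tau (i+1)]
  funext p
  rw [aff, sub_self, zero_mul, add_zero]

lemma hasDerivWithinAt_left_comp (i : ℕ) (p : Fin n) :
    HasDerivWithinAt (fun x => S.P x p) (S.slp i p) (Iic (S.tau (i+1))) (S.tau (i+1)) :=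
  hasDerivWithinAt_pi.1 (S.hasDerivWithinAt_left i) p

lemma hasDerivWithinAt_right_comp (i : ℕ) (p : Fin n) :
    HasDerivWithinAt (fun x => S.P x p) (S.slp (i+1) p) (Ici (S.tau (i+1))) (S.tau (i+1)) :=
  hasDerivWithinAt_pi.1 (S.hasDerivWithinAt_right i) p

lemma derivWithin_left (i : ℕ) (p : Fin n) :
    derivWithin (fun x => S.P x p) (Iic (S.tau (i+1))) (S.tau (i+1)) = S.slp i p :=
  (S.hasDerivWithinAt_left_comp i p).derivWithin (uniqueDiffOn_Iic _ _ self_mem_Iic)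

lemma derivWithin_right (i : ℕ) (p : Fin n) :
    derivWithin (fun x => S.P x p) (Ici (S.tau (i+1))) (S.tau (i+1)) = S.slp (i+1) p :=
  (S.hasDerivWithinAt_right_comp i p).derivWithin (uniqueDiffOn_Ici _ _ self_mem_Ici)

lemma not_diff_of_slp_ne (i : ℕ) (h : S.slp i ≠ S.slp (i+1)) :
    ¬ DifferentiableAt ℝ S.P (S.tau (i+1)) := by
  intro hd
  obtain ⟨p, hp⟩ := Function.ne_iff.1 h
  have hdp : DifferentiableAt ℝ (fun x => S.P x p) (S.tau (i+1)) := differentiableAt_pi.1 hd p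
  have e1 : derivWithin (fun x => S.P x p) (Iic (S.tau (i+1))) (S.tau (i+1))
      = deriv (fun x => S.P x p) (S.tau (i+1)) :=
    (hdp.hasDerivAt.hasDerivWithinAt).derivWithin (uniqueDiffOn_Iic _ _ self_mem_Iic)
  have e2 : derivWithin (fun x => S.P x p) (Ici (S.tau (i+1))) (S.tau (i+1))
      = deriv (fun x => S.P x p) (S.tau (i+1)) :=
    (hdp.hasDerivAt.hasDerivWithinAt).derivWithin (uniqueDiffOn_Ici _ _ self_mem_Ici)
  rw [S.derivWithin_left i p] at e1
  rw [S.derivWithin_right i p] at e2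
  exact hp (e1.trans e2.symm)

lemma slp_eq_of_diff (i : ℕ) (h : DifferentiableAt ℝ S.P (S.tau (i+1))) :
    S.slp i = S.slp (i+1) := by
  by_contra hne
  exact S.not_diff_of_slp_ne i hne h

lemma P_continuous : Continuous S.P := by
  rw [continuous_iff_continuousAt]
  intro q
  rcases lt_or_ge q 1 with hq | hq
  · have : S.P =ᶠ[nhds q] (fun _ => S.c 0) := by
      filter_upwards [Iio_mem_nhds hq] with x hx
      exact S.P_low hx.le
    exact (continuousAt_const).congr this.symm
  · have h1 : S.tau (S.idx q) ≤ q := le_trans (S.tau_idx_le q) (by rw [max_eq_right hq])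
    have h2 : q < S.tau (S.idx q + 1) := by
      have := S.lt_tau_idx_succ q
      rwa [max_eq_right hq] at this
    rcases lt_or_eq_of_le h1 with h1' | h1'
    · exact ((S.aff_hasDerivAt (S.idx q) q).congr_of_eventuallyEq
        (S.ev_eq_aff h1' h2)).continuousAt
    · -- q = tau i
      have hiu : ContinuousWithinAt S.P (Ici q) q := by
        rcases Nat.eq_zero_or_pos (S.idx q) with h0 | h0
        · -- q = tau 0 = 1
          have hq1 : q = 1 := by rw [← h1', h0, S.tau0]
          refine (((S.aff_hasDerivAt 0 q).continuousAt).continuousWithinAt).congr_of_eventuallyEq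
            ?_ ?_
          · rw [Filter.eventuallyEq_iff_exists_mem]
            refine ⟨Ici q ∩ Iio (S.tau 1), inter_mem_nhdsWithin _ (Iio_mem_nhds (by
              rw [hq1, ← S.tau0]; exact S.smono Nat.zero_lt_one)), ?_⟩
            intro x hx
            funext p
            exact S.P_eq_on 0 (by rw [S.tau0, ← hq1]; exact hx.1) hx.2.le p
          · rw [hq1, S.P_low (le_refl 1)]
            funext p
            show S.c 0 p = S.c 0 p + ((1:ℝ) - S.tau 0) * S.slp 0 p
            rw [S.tau0, sub_self, zero_mul, add_zero]
        · obtain ⟨k, hk⟩ := Nat.exists_eq_succ_of_ne_zero (Nat.pos_iff_ne_zero.1 h0)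
          rw [← h1', hk]
          exact (S.hasDerivWithinAt_right k).continuousWithinAt
      have hil : ContinuousWithinAt S.P (Iic q) q := by
        rcases Nat.eq_zero_or_pos (S.idx q) with h0 | h0
        · have hq1 : q = 1 := by rw [← h1', h0, S.tau0]
          have : S.P =ᶠ[nhdsWithin q (Iic q)] (fun _ => S.c 0) := by
            rw [Filter.eventuallyEq_iff_exists_mem]
            exact ⟨Iic q, self_mem_nhdsWithin, fun x hx => S.P_low (le_trans hx hq1.le)⟩
          exact (continuousWithinAt_const).congr_of_eventuallyEq this (by
            rw [hq1, S.P_low (le_refl 1)])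
        · obtain ⟨k, hk⟩ := Nat.exists_eq_succ_of_ne_zero (Nat.pos_iff_ne_zero.1 h0)
          rw [← h1', hk]
          exact (S.hasDerivWithinAt_left k).continuousWithinAt
      have := hil.union hiu
      rwa [Iic_union_Ici, continuousWithinAt_univ] at this


lemma nds_subset : NonDiffSet n (Set.Ici 1) S.P ⊆ range S.tau := by
  intro q hq
  obtain ⟨hq1, hfr | hnd⟩ := hq
  · rw [frontier_Ici] at hfr
    exact ⟨0, by rw [S.tau0]; exact hfr.symm⟩
  · by_contra hr
    have hq1' : (1:ℝ) ≤ q := hq1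
    have h1 : S.tau (S.idx q) ≤ q := by
      have := S.tau_idx_le q; rwa [max_eq_right hq1'] at this
    have h2 : q < S.tau (S.idx q + 1) := by
      have := S.lt_tau_idx_succ q; rwa [max_eq_right hq1'] at this
    have h1' : S.tau (S.idx q) < q := lt_of_le_of_ne h1 (fun h => hr ⟨S.idx q, h⟩)
    exact hnd (S.hasDerivAt_interior h1' h2).differentiableAt

lemma discreteIn : DiscreteIn (NonDiffSet n (Set.Ici 1) S.P) (Set.Ici 1) := by
  constructor
  · intro q hq; exact hq.1
  · intro q hq
    have hq1 : (1:ℝ) ≤ q := hq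
    have h1 : S.tau (S.idx q) ≤ q := by
      have := S.tau_idx_le q; rwa [max_eq_right hq1] at this
    have h2 : q < S.tau (S.idx q + 1) := by
      have := S.lt_tau_idx_succ q; rwa [max_eq_right hq1] at this
    rcases lt_or_eq_of_le h1 with h1' | h1'
    · refine ⟨min (q - S.tau (S.idx q)) (S.tau (S.idx q + 1) - q),
        lt_min (by linarith) (by linarith), ?_⟩
      rintro x ⟨hx1, hx2⟩
      exfalso
      obtain ⟨k, hk⟩ := S.nds_subset hx1
      have hm1 := min_le_left (q - S.tau (S.idx q)) (S.tau (S.idx q + 1) - q)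
      have hm2 := min_le_right (q - S.tau (S.idx q)) (S.tau (S.idx q + 1) - q)
      obtain ⟨hxa, hxb⟩ := hx2
      have hgt : S.tau (S.idx q) < S.tau k := by rw [hk]; linarith
      have hk1 : S.idx q + 1 ≤ k := S.smono.lt_iff_lt.1 hgt
      have hge : S.tau (S.idx q + 1) ≤ S.tau k := S.smono.monotone hk1
      rw [hk] at hge
      linarith
    · rcases Nat.eq_zero_or_pos (S.idx q) with h0 | h0
      · -- q = 1
        have hq1' : q = 1 := by rw [← h1', h0, S.tau0]
        refine ⟨S.tau 1 - q, by rw [hq1', ← S.tau0]; linarith [S.smono (Nat.zero_lt_one)], ?_⟩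
        rintro x ⟨hx1, hx2⟩
        obtain ⟨k, hk⟩ := S.nds_subset hx1
        have hxge : (1:ℝ) ≤ x := hx1.1
        obtain ⟨hxa, hxb⟩ := hx2
        rcases Nat.eq_zero_or_pos k with hk0 | hk0
        · rw [hk0, S.tau0, ← hq1'] at hk
          exact hk.symm
        · exfalso
          have hge : S.tau 1 ≤ S.tau k := S.smono.monotone hk0
          rw [hk] at hge
          linarith
      · obtain ⟨m, hm⟩ := Nat.exists_eq_succ_of_ne_zero (Nat.pos_iff_ne_zero.1 h0)
        have htm : S.tau m < q := by
          rw [← h1', hm]; exact S.smono (Nat.lt_succ_self m)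
        refine ⟨min (q - S.tau m) (S.tau (S.idx q + 1) - q),
          lt_min (by linarith) (by linarith), ?_⟩
        rintro x ⟨hx1, hx2⟩
        obtain ⟨k, hk⟩ := S.nds_subset hx1
        have hm1 := min_le_left (q - S.tau m) (S.tau (S.idx q + 1) - q)
        have hm2 := min_le_right (q - S.tau m) (S.tau (S.idx q + 1) - q)
        obtain ⟨hxa, hxb⟩ := hx2
        have hgt : S.tau m < S.tau k := by rw [hk]; linarith
        have hk1 : m + 1 ≤ k := S.smono.lt_iff_lt.1 hgt
        have hlt2 : S.tau k < S.tau (S.idx q + 1) := by rw [hk]; linarith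
        have hk2 : k < S.idx q + 1 := S.smono.lt_iff_lt.1 hlt2
        have hkk : k = S.idx q := by omega
        show x = q
        rw [← hk, hkk, h1']

lemma deriv_eq_interior {i : ℕ} {q : ℝ} (h1 : S.tau i < q) (h2 : q < S.tau (i+1)) :
    deriv S.P q = S.slp i := (S.hasDerivAt_interior h1 h2).deriv

lemma deriv_eq_junction (i : ℕ) (h : DifferentiableAt ℝ S.P (S.tau (i+1))) :
    deriv S.P (S.tau (i+1)) = S.slp (i+1) := by
  have huniq : UniqueDiffWithinAt ℝ (Ici (S.tau (i+1))) (S.tau (i+1)) :=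
    uniqueDiffOn_Ici _ _ self_mem_Ici
  have e1 := (h.hasDerivAt.hasDerivWithinAt (s := Ici (S.tau (i+1)))).derivWithin huniq
  have e2 := (S.hasDerivWithinAt_right i).derivWithin huniq
  rw [e1] at e2
  exact e2

lemma deriv_loc_const : ∀ q ∈ Set.Ici (1:ℝ) \ NonDiffSet n (Set.Ici 1) S.P, ∃ ε > (0:ℝ),
    ∀ x ∈ (Set.Ici (1:ℝ) \ NonDiffSet n (Set.Ici 1) S.P) ∩ Ioo (q - ε) (q + ε),
      deriv S.P x = deriv S.P q := by
  rintro q ⟨hq1, hqn⟩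
  have hq1 : (1:ℝ) ≤ q := hq1
  have hdq : DifferentiableAt ℝ S.P q := by
    by_contra h; exact hqn ⟨hq1, Or.inr h⟩
  have hq1' : (1:ℝ) < q := by
    rcases lt_or_eq_of_le hq1 with h | h
    · exact h
    · exfalso; exact hqn ⟨hq1, Or.inl (by rw [frontier_Ici, ← h]; rfl)⟩
  have h1 : S.tau (S.idx q) ≤ q := by
    have := S.tau_idx_le q; rwa [max_eq_right hq1] at this
  have h2 : q < S.tau (S.idx q + 1) := by
    have := S.lt_tau_idx_succ q; rwa [max_eq_right hq1] at this
  rcases lt_or_eq_of_le h1 with h1' | h1'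
  · refine ⟨min (q - S.tau (S.idx q)) (S.tau (S.idx q + 1) - q),
      lt_min (by linarith) (by linarith), ?_⟩
    rintro x ⟨_, hx2⟩
    obtain ⟨hxa, hxb⟩ := hx2
    have hm1 := min_le_left (q - S.tau (S.idx q)) (S.tau (S.idx q + 1) - q)
    have hm2 := min_le_right (q - S.tau (S.idx q)) (S.tau (S.idx q + 1) - q)
    rw [S.deriv_eq_interior (by linarith : S.tau (S.idx q) < x) (by linarith),
      S.deriv_eq_interior h1' h2]
  · have hi0 : S.idx q ≠ 0 := by
      intro h0; rw [h0, S.tau0] at h1'; linarith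
    obtain ⟨k, hk⟩ := Nat.exists_eq_succ_of_ne_zero hi0
    have hqt : q = S.tau (k+1) := by rw [← h1', hk]
    have hsl : S.slp k = S.slp (k+1) := S.slp_eq_of_diff k (by rw [← hqt]; exact hdq)
    have hderq : deriv S.P q = S.slp (k+1) := by
      rw [hqt]; exact S.deriv_eq_junction k (by rw [← hqt]; exact hdq)
    have htm : S.tau k < q := by rw [hqt]; exact S.smono (Nat.lt_succ_self k)
    refine ⟨min (q - S.tau k) (S.tau (S.idx q + 1) - q),
      lt_min (by linarith) (by linarith), ?_⟩
    rintro x ⟨_, hx2⟩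
    obtain ⟨hxa, hxb⟩ := hx2
    have hm1 := min_le_left (q - S.tau k) (S.tau (S.idx q + 1) - q)
    have hm2 := min_le_right (q - S.tau k) (S.tau (S.idx q + 1) - q)
    rcases lt_trichotomy x q with hx | hx | hx
    · have hxk1 : x < S.tau (k+1) := by rw [← hqt]; exact hx
      rw [S.deriv_eq_interior (by linarith : S.tau k < x) hxk1, hsl, hderq]
    · rw [hx]
    · have hxk1 : S.tau (S.idx q) < x := by rw [h1']; exact hx
      rw [S.deriv_eq_interior hxk1 (by linarith), hderq, hk]
      
lemma g1 : ∀ q ∈ Set.Ici (1:ℝ), ((∀ p, 0 ≤ S.P q p) ∧ Monotone (S.P q)) ∧ ∑ p, S.P q p = q := by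
  intro q hq
  have hq1 : (1:ℝ) ≤ q := hq
  have h1 : S.tau (S.idx q) ≤ q := by
    have := S.tau_idx_le q; rwa [max_eq_right hq1] at this
  have h2 : q ≤ S.tau (S.idx q + 1) := by
    have := S.lt_tau_idx_succ q; rw [max_eq_right hq1] at this; exact this.le
  set i := S.idx q with hidef
  have hform : ∀ p, S.P q p = S.c i p + (q - S.tau i) * S.slp i p :=
    fun p => S.P_eq_on i h1 h2 p
  have hqt : 0 ≤ q - S.tau i := by linarith
  refine ⟨⟨?_, ?_⟩, ?_⟩
  · intro p
    rw [hform p]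
    have := S.c_nonneg i p
    have := S.slp_nonneg i p
    nlinarith
  · intro p p' hpp'
    have hpv : (p:ℕ) ≤ (p':ℕ) := hpp'
    rw [hform p, hform p']
    by_cases hp : S.lo i ≤ (p:ℕ) ∧ (p:ℕ) ≤ S.hi i
    · by_cases hp' : S.lo i ≤ (p':ℕ) ∧ (p':ℕ) ≤ S.hi i
      · have hlon : S.lo i < n := lt_of_le_of_lt (S.lo_le_hi i) (S.hi_lt i)
        have e1 : S.c i p = S.c i p' := by
          rw [S.eqblock i p ⟨S.lo i, hlon⟩ hp.1 hp.2 rfl,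
            S.eqblock i p' ⟨S.lo i, hlon⟩ hp'.1 hp'.2 rfl]
        rw [e1, S.slp_eq_of_mem i p hp.1 hp.2, S.slp_eq_of_mem i p' hp'.1 hp'.2]
      · have hgt : S.hi i < (p':ℕ) := by omega
        have hz : S.slp i p' = 0 := S.slp_eq_zero i p' (by omega)
        have step1 : S.P q p ≤ S.c (i+1) p := by
          rw [hform p, S.crec i p]
          have hr : sl S.lo S.hi i p = S.slp i p := rfl
          rw [hr]
          have := S.slp_nonneg i p
          nlinarith
        have step2 : S.c (i+1) p ≤ S.c (i+1) p' := S.monoc (i+1) hpp'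
        have step3 : S.c (i+1) p' = S.c i p' := by
          rw [S.crec i p']
          have hr : sl S.lo S.hi i p' = S.slp i p' := rfl
          rw [hr, hz, mul_zero, add_zero]
        rw [hz, mul_zero, add_zero]
        rw [hform p] at step1
        linarith
    · have hz : S.slp i p = 0 := S.slp_eq_zero i p hp
      rw [hz, mul_zero, add_zero]
      have hm := S.monoc i hpp'
      have := S.slp_nonneg i p'
      nlinarith
  · have : ∑ p, S.P q p = ∑ p, (S.c i p + (q - S.tau i) * S.slp i p) :=
      Finset.sum_congr rfl fun p _ => hform p
    rw [this, Finset.sum_add_distrib, ← Finset.mul_sum, S.sumc i, S.slp_sum i, mul_one]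
    ring

lemma blocks_eq_of_slp_eq {i i' : ℕ} (h : S.slp i = S.slp i') :
    S.lo i = S.lo i' ∧ S.hi i = S.hi i' := by
  have hlon : S.lo i < n := lt_of_le_of_lt (S.lo_le_hi i) (S.hi_lt i)
  have hlon' : S.lo i' < n := lt_of_le_of_lt (S.lo_le_hi i') (S.hi_lt i')
  have m1 : S.slp i (⟨S.lo i, hlon⟩ : Fin n) ≠ 0 :=
    (S.slp_ne_iff i _).2 ⟨le_refl _, S.lo_le_hi i⟩
  have m2 : S.slp i (⟨S.hi i, S.hi_lt i⟩ : Fin n) ≠ 0 :=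
    (S.slp_ne_iff i _).2 ⟨S.lo_le_hi i, le_refl _⟩
  have m1' : S.slp i' (⟨S.lo i', hlon'⟩ : Fin n) ≠ 0 :=
    (S.slp_ne_iff i' _).2 ⟨le_refl _, S.lo_le_hi i'⟩
  have m2' : S.slp i' (⟨S.hi i', S.hi_lt i'⟩ : Fin n) ≠ 0 :=
    (S.slp_ne_iff i' _).2 ⟨S.lo_le_hi i', le_refl _⟩
  rw [h] at m1 m2
  rw [← h] at m1' m2'
  obtain ⟨a1, a2⟩ := (S.slp_ne_iff i' _).1 m1
  obtain ⟨b1, b2⟩ := (S.slp_ne_iff i' _).1 m2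
  obtain ⟨a1', a2'⟩ := (S.slp_ne_iff i _).1 m1'
  obtain ⟨b1', b2'⟩ := (S.slp_ne_iff i _).1 m2'
  simp only at a1 a2 b1 b2 a1' a2' b1' b2'
  omega

lemma block_ident (m : ℕ) (rlo rhi : Fin n) (hle : rlo ≤ rhi)
    (h : ∀ p : Fin n, rlo ≤ p → p ≤ rhi →
      S.slp m p = 1 / (((rhi:ℕ):ℝ) - ((rlo:ℕ):ℝ) + 1)) :
    (rlo : ℕ) = S.lo m ∧ (rhi : ℕ) = S.hi m := by
  have hlev : (rlo:ℕ) ≤ (rhi:ℕ) := hle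
  have hD : (0:ℝ) < ((rhi:ℕ):ℝ) - ((rlo:ℕ):ℝ) + 1 := by
    have : ((rlo:ℕ):ℝ) ≤ ((rhi:ℕ):ℝ) := Nat.cast_le.2 hlev
    linarith
  have h1 := h rlo (le_refl _) hle
  have h2 := h rhi hle (le_refl _)
  have ne1 : S.slp m rlo ≠ 0 := by rw [h1]; exact ne_of_gt (one_div_pos.2 hD)
  have ne2 : S.slp m rhi ≠ 0 := by rw [h2]; exact ne_of_gt (one_div_pos.2 hD)
  obtain ⟨a1, a2⟩ := (S.slp_ne_iff m rlo).1 ne1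
  obtain ⟨b1, b2⟩ := (S.slp_ne_iff m rhi).1 ne2
  have hx : (0:ℝ) < ((S.hi m - S.lo m : ℕ):ℝ) + 1 := by positivity
  have hval := S.slp_eq_of_mem m rlo a1 a2
  rw [hval] at h1
  have hAB : ((rhi:ℕ):ℝ) - ((rlo:ℕ):ℝ) + 1 = ((S.hi m - S.lo m : ℕ):ℝ) + 1 := by
    have := (div_eq_div_iff (ne_of_gt hx) (ne_of_gt hD)).1 h1
    linarith
  have hc : (((rhi:ℕ) - (rlo:ℕ) : ℕ):ℝ) = ((rhi:ℕ):ℝ) - ((rlo:ℕ):ℝ) := Nat.cast_sub hlev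
  have hnat : (rhi:ℕ) - (rlo:ℕ) = S.hi m - S.lo m := by
    have : (((rhi:ℕ) - (rlo:ℕ) : ℕ):ℝ) = ((S.hi m - S.lo m : ℕ):ℝ) := by
      rw [hc]; linarith
    exact_mod_cast this
  omega

lemma g2 : ∀ a b : ℝ, a < b → Ioo a b ⊆ Set.Ici 1 →
    (∀ q ∈ Ioo a b, DifferentiableAt ℝ S.P q) →
    ∃ rlo rhi : Fin n, rlo ≤ rhi ∧
      (∀ j : Fin n, rlo ≤ j → j ≤ rhi → ∀ q ∈ Ioo a b,
        S.P q j = S.P q rlo ∧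
        deriv (fun x => S.P x j) q = 1 / (((rhi : ℕ) : ℝ) - ((rlo : ℕ) : ℝ) + 1)) ∧
      (∀ j : Fin n, j < rlo ∨ rhi < j →
        ∀ p ∈ Ioo a b, ∀ q ∈ Ioo a b, S.P p j = S.P q j) := by
  intro a b hab hsub hdiff
  have ha1 : (1:ℝ) ≤ a := by
    by_contra h
    push_neg at h
    have hx : (a + min b 1)/2 ∈ Ioo a b := by
      constructor
      · have : a < min b 1 := lt_min hab h
        linarith
      · have h1 : (a + min b 1)/2 < min b 1 := by
          have : a < min b 1 := lt_min hab h
          linarith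
        exact lt_of_lt_of_le h1 (min_le_left _ _)
    have := hsub hx
    have h2 : (a + min b 1)/2 < 1 := by
      have h1 : (a + min b 1)/2 < min b 1 := by
        have : a < min b 1 := lt_min hab h
        linarith
      exact lt_of_lt_of_le h1 (min_le_right _ _)
    have : (1:ℝ) ≤ (a + min b 1)/2 := this
    linarith
  set i0 := S.idx a with hi0def
  have hi0a : S.tau i0 ≤ a := by
    have := S.tau_idx_le a; rwa [max_eq_right ha1] at this
  have hi0b : a < S.tau (i0+1) := by
    have := S.lt_tau_idx_succ a; rwa [max_eq_right ha1] at this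
  have propag : ∀ i, i0 ≤ i → S.tau i < b →
      S.slp i = S.slp i0 ∧ (∀ p, S.slp i0 p = 0 → S.c i p = S.c i0 p) := by
    intro i
    induction i with
    | zero =>
      intro h0 _
      have : i0 = 0 := Nat.le_zero.1 h0
      rw [this]
      exact ⟨rfl, fun _ _ => rfl⟩
    | succ k ih =>
      intro hk hb
      rcases Nat.lt_or_ge i0 (k+1) with h' | h'
      · have hk' : i0 ≤ k := by omega
        have htkb : S.tau k < b := lt_trans (S.smono (Nat.lt_succ_self k)) hb
        obtain ⟨e1, e2⟩ := ih hk' htkb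
        have hjun : S.tau (k+1) ∈ Ioo a b :=
          ⟨lt_of_lt_of_le hi0b (S.smono.monotone (by omega)), hb⟩
        have e3 : S.slp k = S.slp (k+1) := S.slp_eq_of_diff k (hdiff _ hjun)
        refine ⟨by rw [← e3]; exact e1, fun p hp => ?_⟩
        have hkp : S.slp k p = 0 := by rw [e1]; exact hp
        rw [S.crec k p]
        have hr : sl S.lo S.hi k p = S.slp k p := rfl
        rw [hr, hkp, mul_zero, add_zero]
        exact e2 p hp
      · have : i0 = k+1 := le_antisymm hk h'
        rw [this]
        exact ⟨rfl, fun _ _ => rfl⟩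
  have hlon : S.lo i0 < n := lt_of_le_of_lt (S.lo_le_hi i0) (S.hi_lt i0)
  -- key facts for every q ∈ Ioo a b
  have keyq : ∀ q ∈ Ioo a b, S.idx q ∈ {i | i0 ≤ i ∧ S.tau i ≤ q ∧ q ≤ S.tau (i+1)} := by
    intro q hq
    have hq1 : (1:ℝ) ≤ q := hsub hq
    have h1 : S.tau (S.idx q) ≤ q := by
      have := S.tau_idx_le q; rwa [max_eq_right hq1] at this
    have h2 : q < S.tau (S.idx q + 1) := by
      have := S.lt_tau_idx_succ q; rwa [max_eq_right hq1] at this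
    refine ⟨?_, h1, h2.le⟩
    by_contra h
    push_neg at h
    have : q < S.tau i0 := lt_of_lt_of_le h2 (S.smono.monotone (by omega))
    have := hq.1
    linarith
  refine ⟨⟨S.lo i0, hlon⟩, ⟨S.hi i0, S.hi_lt i0⟩, S.lo_le_hi i0, ?_, ?_⟩
  · intro j hj1 hj2 q hq
    have hq1 : (1:ℝ) ≤ q := hsub hq
    obtain ⟨hii0, h1, h2⟩ := keyq q hq
    set i := S.idx q with hidef
    have htib : S.tau i < b := lt_of_le_of_lt h1 hq.2
    obtain ⟨e1, e2⟩ := propag i hii0 htib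
    obtain ⟨hbl, hbh⟩ := S.blocks_eq_of_slp_eq e1
    have hjv1 : S.lo i ≤ (j:ℕ) := by rw [hbl]; exact hj1
    have hjv2 : (j:ℕ) ≤ S.hi i := by rw [hbh]; exact hj2
    constructor
    · rw [S.P_eq_on i h1 h2 j, S.P_eq_on i h1 h2 ⟨S.lo i0, hlon⟩]
      have hc : S.c i j = S.c i ⟨S.lo i0, hlon⟩ := by
        refine S.eqblock i j ⟨S.lo i0, hlon⟩ hjv1 hjv2 ?_
        simp [hbl]
      have hs : S.slp i j = S.slp i ⟨S.lo i0, hlon⟩ := by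
        rw [S.slp_eq_of_mem i j hjv1 hjv2,
          S.slp_eq_of_mem i ⟨S.lo i0, hlon⟩ (by simp [hbl]) (by simp; rw [hbl] at *; omega)]
      rw [hc, hs]
    · -- derivative value
      have hderiv : deriv (fun x => S.P x j) q = S.slp i j := by
        rcases lt_or_eq_of_le h1 with h1' | h1'
        · rcases lt_or_eq_of_le h2 with h2' | h2'
          · exact (S.hasDerivAt_interior_comp h1' h2' j).deriv
          · -- q = tau (i+1) : impossible since idx q = i and q < tau (i+1)
            exfalso
            have := S.lt_tau_idx_succ q
            rw [max_eq_right hq1, ← hidef] at this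
            rw [h2'] at this
            exact lt_irrefl _ this
        · -- q = tau i junction
          have hi0' : i ≠ 0 := by
            intro h0
            rw [h0, S.tau0] at h1'
            have := hq.1
            linarith
          obtain ⟨k, hk⟩ := Nat.exists_eq_succ_of_ne_zero hi0'
          have hqt : q = S.tau (k+1) := by rw [← h1', hk]
          have hdp : DifferentiableAt ℝ (fun x => S.P x j) q :=
            differentiableAt_pi.1 (hdiff q hq) j
          have huniq : UniqueDiffWithinAt ℝ (Ici q) q := uniqueDiffOn_Ici _ _ self_mem_Ici
          have e3 : derivWithin (fun x => S.P x j) (Ici q) q = deriv (fun x => S.P x j) q :=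
            (hdp.hasDerivAt.hasDerivWithinAt).derivWithin huniq
          have e4 : derivWithin (fun x => S.P x j) (Ici q) q = S.slp (k+1) j := by
            rw [hqt]
            exact (S.hasDerivWithinAt_right_comp k j).derivWithin
              (uniqueDiffOn_Ici _ _ self_mem_Ici)
          rw [← e3, e4, hk]
      rw [hderiv]
      rw [S.slp_eq_of_mem i j hjv1 hjv2]
      have hcast : ((S.hi i - S.lo i : ℕ):ℝ) = ((S.hi i0:ℕ):ℝ) - ((S.lo i0:ℕ):ℝ) := by
        rw [hbl, hbh, Nat.cast_sub (S.lo_le_hi i0)]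
      rw [hcast]
  · intro j hj p hp q hq
    have hj0 : S.slp i0 j = 0 := by
      refine S.slp_eq_zero i0 j ?_
      rcases hj with h | h
      · have : (j:ℕ) < S.lo i0 := h
        omega
      · have : S.hi i0 < (j:ℕ) := h
        omega
    have val : ∀ x ∈ Ioo a b, S.P x j = S.c i0 j := by
      intro x hx
      obtain ⟨hii0, h1, h2⟩ := keyq x hx
      have htib : S.tau (S.idx x) < b := lt_of_le_of_lt h1 hx.2
      obtain ⟨e1, e2⟩ := propag (S.idx x) hii0 htib
      rw [S.P_eq_on (S.idx x) h1 h2 j]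
      have hz : S.slp (S.idx x) j = 0 := by rw [e1]; exact hj0
      rw [hz, mul_zero, add_zero]
      exact e2 j hj0
    rw [val p hp, val q hq]

lemma g3 : ∀ q ∈ interior (Set.Ici (1:ℝ)), ¬DifferentiableAt ℝ S.P q →
    ∀ rlo rhi slo shi : Fin n, rlo ≤ rhi → slo ≤ shi →
      (∀ j : Fin n, rlo ≤ j → j ≤ rhi →
        derivWithin (fun x => S.P x j) (Set.Iic q) q
          = 1 / (((rhi : ℕ) : ℝ) - ((rlo : ℕ) : ℝ) + 1)) →
      (∀ j : Fin n, slo ≤ j → j ≤ shi →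
        derivWithin (fun x => S.P x j) (Set.Ici q) q
          = 1 / (((shi : ℕ) : ℝ) - ((slo : ℕ) : ℝ) + 1)) →
      rlo < shi →
      ∀ p : Fin n, rlo ≤ p → p ≤ shi → S.P q p = S.P q rlo := by
  intro q hq hnd rlo rhi slo shi hrle hsle hL hR hlt p hp1 hp2
  rw [interior_Ici] at hq
  have hq1 : (1:ℝ) < q := hq
  have h1 : S.tau (S.idx q) ≤ q := by
    have := S.tau_idx_le q; rwa [max_eq_right hq1.le] at this
  have h2 : q < S.tau (S.idx q + 1) := by
    have := S.lt_tau_idx_succ q; rwa [max_eq_right hq1.le] at this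
  have h1' : S.tau (S.idx q) = q := by
    rcases lt_or_eq_of_le h1 with h | h
    · exact absurd (S.hasDerivAt_interior h h2).differentiableAt hnd
    · exact h
  have hi0 : S.idx q ≠ 0 := by
    intro h0; rw [h0, S.tau0] at h1'; linarith
  obtain ⟨k, hk⟩ := Nat.exists_eq_succ_of_ne_zero hi0
  have hqt : q = S.tau (k+1) := by rw [← h1', hk]
  have eL : ∀ j : Fin n, derivWithin (fun x => S.P x j) (Iic q) q = S.slp k j := by
    intro j; rw [hqt]; exact S.derivWithin_left k j
  have eR : ∀ j : Fin n, derivWithin (fun x => S.P x j) (Ici q) q = S.slp (k+1) j := by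
    intro j; rw [hqt]; exact S.derivWithin_right k j
  have idL : (rlo : ℕ) = S.lo k ∧ (rhi : ℕ) = S.hi k := by
    refine S.block_ident k rlo rhi hrle (fun j hj1 hj2 => ?_)
    rw [← eL j]
    exact hL j hj1 hj2
  have idR : (slo : ℕ) = S.lo (k+1) ∧ (shi : ℕ) = S.hi (k+1) := by
    refine S.block_ident (k+1) slo shi hsle (fun j hj1 hj2 => ?_)
    rw [← eR j]
    exact hR j hj1 hj2
  have htrig : S.lo k < S.hi (k+1) := by
    rw [← idL.1, ← idR.2]
    exact hlt
  have hg := S.g3c k p rlo htrig (by rw [← idL.1]; exact hp1) (by rw [← idR.2]; exact hp2) idL.1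
  rw [hqt, S.P_tau (k+1)]
  exact hg

theorem isGenNSystem : IsGenNSystem n (Set.Ici 1) S.P := by
  refine ⟨⟨S.P_continuous.continuousOn, S.discreteIn, S.deriv_loc_const⟩, S.g1, S.g2, S.g3⟩


lemma psi_c_succ (j : ℕ) (i : ℕ) :
    psiSum n j (S.c (i+1)) = psiSum n j (S.c i)
      + (S.tau (i+1) - S.tau i) * psiSum n j (S.slp i) := by
  have h : ∀ p, S.c (i+1) p = S.c i p + (S.tau (i+1) - S.tau i) * S.slp i p := S.crec i
  rw [psiSum_congr n j h, psiSum_add, psiSum_smul]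

lemma psi_P_eq (j : ℕ) (i : ℕ) {q : ℝ} (h1 : S.tau i ≤ q) (h2 : q ≤ S.tau (i+1)) :
    psiSum n j (S.P q) = psiSum n j (S.c i) + (q - S.tau i) * psiSum n j (S.slp i) := by
  have h : ∀ p, S.P q p = S.c i p + (q - S.tau i) * S.slp i p := S.P_eq_on i h1 h2
  rw [psiSum_congr n j h, psiSum_add, psiSum_smul]

lemma seg_lower (i j : ℕ) (C : ℝ)
    (h1 : C * S.tau i ≤ psiSum n j (S.c i)) (h2 : C * S.tau (i+1) ≤ psiSum n j (S.c (i+1)))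
    {q : ℝ} (hq1 : S.tau i ≤ q) (hq2 : q ≤ S.tau (i+1)) :
    C * q ≤ psiSum n j (S.P q) := by
  rw [S.psi_P_eq j i hq1 hq2]
  rw [S.psi_c_succ j i] at h2
  have e1 : psiSum n j (S.c i) + (q - S.tau i) * psiSum n j (S.slp i)
      = (psiSum n j (S.c i) - S.tau i * psiSum n j (S.slp i)) + psiSum n j (S.slp i) * q := by
    ring
  rw [e1]
  apply affine_le_of_endpoints hq1 hq2
  · linarith [h1]
  · have : C * S.tau (i+1) ≤ (psiSum n j (S.c i) - S.tau i * psiSum n j (S.slp i))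
        + psiSum n j (S.slp i) * S.tau (i+1) := by linarith [h2]
    exact this

lemma seg_upper (i j : ℕ) (C : ℝ)
    (h1 : psiSum n j (S.c i) ≤ C * S.tau i) (h2 : psiSum n j (S.c (i+1)) ≤ C * S.tau (i+1))
    {q : ℝ} (hq1 : S.tau i ≤ q) (hq2 : q ≤ S.tau (i+1)) :
    psiSum n j (S.P q) ≤ C * q := by
  rw [S.psi_P_eq j i hq1 hq2]
  rw [S.psi_c_succ j i] at h2
  have key : (-C) * q ≤ (-(psiSum n j (S.c i)) + S.tau i * psiSum n j (S.slp i))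
      + (-(psiSum n j (S.slp i))) * q := by
    apply affine_le_of_endpoints hq1 hq2
    · linarith [h1]
    · linarith [h2]
  linarith [key]

lemma idx_ge {i0 : ℕ} {q : ℝ} (h : S.tau i0 ≤ q) : i0 ≤ S.idx q := by
  by_contra h'
  push_neg at h'
  have h2 : S.tau (S.idx q + 1) ≤ S.tau i0 := S.smono.monotone (by omega)
  have h3 := S.lt_tau_idx_succ q
  have h4 : q ≤ max 1 q := le_max_right _ _
  linarith

end SegData

-- ===== Part B : the explicit construction =====
section Construction

def jjf (n m : ℕ) : ℕ := m % (n-1) + 1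

def epsf (m : ℕ) : ℝ := 1/(m+1)

def wf (n : ℕ) (L : ℕ → ℝ) (m : ℕ) : ℝ :=
  min (L (jjf n m) + epsf m) (jjf n m / n) / (1 + epsf m)

def Kf (n : ℕ) (L : ℕ → ℝ) (m : ℕ) : ℝ :=
  (jjf n m) * (1 - wf n L m) / (((n:ℝ) - jjf n m) * wf n L m)

def sf (n : ℕ) (L : ℕ → ℝ) : ℕ → ℝ
  | 0 => 1/n
  | m+1 => 2 * Kf n L m * sf n L m

variable {n : ℕ} {L : ℕ → ℝ}

lemma sf_succ (m : ℕ) : sf n L (m+1) = 2 * Kf n L m * sf n L m := rfl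

section Facts
variable (hn : 2 ≤ n) (hL0 : ∀ j, 0 ≤ L j)
    (hL2 : ∀ j, 1 ≤ j → j ≤ n - 1 → (n:ℝ) * L j ≤ j)

lemma hjj1 (m : ℕ) : 1 ≤ jjf n m := Nat.le_add_left 1 _

include hn in
lemma hjj2 (m : ℕ) : jjf n m ≤ n - 1 := by
  unfold jjf
  have : m % (n-1) < n - 1 := Nat.mod_lt _ (by omega)
  omega

include hn in
lemma hjjlt (m : ℕ) : ((jjf n m : ℕ) : ℝ) < n := by
  have h := hjj2 (n := n) hn m
  have : (jjf n m) < n := by omega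
  exact_mod_cast this

lemma heps (m : ℕ) : 0 < epsf m := by
  unfold epsf; positivity

lemma heps1 (m : ℕ) : epsf m ≤ 1 := by
  unfold epsf
  rw [div_le_one (by positivity)]
  have : (0:ℝ) ≤ m := Nat.cast_nonneg m
  linarith

lemma heps_anti : ∀ m m' : ℕ, m ≤ m' → epsf m' ≤ epsf m := by
  intro m m' h
  unfold epsf
  have h1 : (0:ℝ) < (m:ℝ) + 1 := by positivity
  have h2 : (m:ℝ) + 1 ≤ (m':ℝ) + 1 := by
    have : (m:ℝ) ≤ m' := Nat.cast_le.2 h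
    linarith
  exact one_div_le_one_div_of_le h1 h2

include hn hL0 in
lemma hw_pos (m : ℕ) : 0 < wf n L m := by
  have hj1 : (1:ℝ) ≤ (jjf n m : ℝ) := by exact_mod_cast hjj1 (n := n) m
  have hnp : (0:ℝ) < n := by
    have : 0 < n := by omega
    exact_mod_cast this
  have he := heps m
  unfold wf
  apply div_pos
  · apply lt_min
    · have := hL0 (jjf n m); linarith
    · positivity
  · linarith

lemma hw_id (m : ℕ) : wf n L m * (1 + epsf m)
    = min (L (jjf n m) + epsf m) ((jjf n m : ℝ) / n) := by
  have he := heps m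
  unfold wf
  exact div_mul_cancel₀ _ (by linarith)

include hn hL2 in
lemma hwL (m : ℕ) : L (jjf n m) ≤ (1 + epsf m) * wf n L m := by
  have hnp : (0:ℝ) < n := by
    have : 0 < n := by omega
    exact_mod_cast this
  have h2 := hL2 (jjf n m) (hjj1 m) (hjj2 (n := n) hn m)
  have hmin : L (jjf n m) ≤ min (L (jjf n m) + epsf m) ((jjf n m : ℝ) / n) := by
    apply le_min
    · have := heps m; linarith
    · rw [le_div_iff₀ hnp]
      linarith [h2]
  rw [mul_comm, hw_id]
  exact hmin

lemma hwU (m : ℕ) : (1 + epsf m) * wf n L m ≤ L (jjf n m) + epsf m := by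
  rw [mul_comm, hw_id]
  exact min_le_left _ _

include hn hL0 in
lemma hw_lt (m : ℕ) : (n:ℝ) * wf n L m < (jjf n m : ℝ) := by
  have hnp : (0:ℝ) < n := by
    have : 0 < n := by omega
    exact_mod_cast this
  have he := heps m
  have hwp := hw_pos hn hL0 (L := L) m
  have h1 : wf n L m * (1 + epsf m) ≤ (jjf n m : ℝ) / n := by
    rw [hw_id]; exact min_le_right _ _
  have h2 : wf n L m * (1 + epsf m) * n ≤ (jjf n m : ℝ) := (le_div_iff₀ hnp).1 h1
  nlinarith [mul_pos (mul_pos hnp hwp) he]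

include hn hL0 in
lemma hw_lt1 (m : ℕ) : wf n L m < 1 := by
  have h := hw_lt hn hL0 (L := L) m
  have h2 := hjj2 (n := n) hn m
  have hle : ((jjf n m : ℕ):ℝ) ≤ (n:ℝ) - 1 := by
    have : (jjf n m : ℕ) ≤ n - 1 := h2
    have h3 : ((jjf n m : ℕ):ℝ) ≤ ((n - 1 : ℕ):ℝ) := Nat.cast_le.2 this
    have h4 : ((n - 1 : ℕ):ℝ) = (n:ℝ) - 1 := by
      have : 1 ≤ n := by omega
      push_cast [this]
      ring
    linarith [h3, h4.le, h4.ge]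
  have hnp : (0:ℝ) < n := by
    have : 0 < n := by omega
    exact_mod_cast this
  nlinarith

include hn hL0 in
lemma hden_pos (m : ℕ) : 0 < ((n:ℝ) - jjf n m) * wf n L m := by
  have h := hjjlt (n := n) hn m
  have hwp := hw_pos hn hL0 (L := L) m
  nlinarith

include hn hL0 in
lemma hK_gt1 (m : ℕ) : 1 < Kf n L m := by
  have hlt := hw_lt hn hL0 (L := L) m
  have hwp := hw_pos hn hL0 (L := L) m
  have hdp := hden_pos hn hL0 (L := L) m
  have hnum : ((n:ℝ) - jjf n m) * wf n L m < (jjf n m) * (1 - wf n L m) := by nlinarith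
  unfold Kf
  rw [lt_div_iff₀ hdp]
  linarith

include hn hL0 in
lemma hK_pos (m : ℕ) : 0 < Kf n L m :=
  lt_trans one_pos (hK_gt1 hn hL0 m)

include hn hL0 in
lemma hs_pos (m : ℕ) : 0 < sf n L m := by
  induction m with
  | zero =>
    have : (0:ℝ) < n := by
      have : 0 < n := by omega
      exact_mod_cast this
    unfold sf; positivity
  | succ k ih =>
    rw [sf_succ]
    have := hK_pos hn hL0 (L := L) k
    positivity

include hn hL0 in
lemma hs_ge (m : ℕ) : (2:ℝ)^m / n ≤ sf n L m := by
  induction m with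
  | zero => unfold sf; norm_num
  | succ k ih =>
    rw [sf_succ]
    have hK := hK_gt1 hn hL0 (L := L) k
    have hsp := hs_pos hn hL0 (L := L) k
    have hnp : (0:ℝ) < n := by
      have : 0 < n := by omega
      exact_mod_cast this
    have : (2:ℝ)^(k+1) / n = 2 * ((2:ℝ)^k / n) := by ring
    rw [this]
    nlinarith

end Facts


-- ==== the concrete segment data ====

def tauf (n : ℕ) (L : ℕ → ℝ) (i : ℕ) : ℝ :=
  if i % 3 = 0 then n * sf n L (i/3)
  else if i % 3 = 1 then jjf n (i/3) * sf n L (i/3) / wf n L (i/3)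
  else n * (Kf n L (i/3) * sf n L (i/3))

def cf (n : ℕ) (L : ℕ → ℝ) (i : ℕ) : Fin n → ℝ := fun p =>
  if i % 3 = 0 then sf n L (i/3)
  else if i % 3 = 1 then
    (if (p:ℕ) < jjf n (i/3) then sf n L (i/3) else Kf n L (i/3) * sf n L (i/3))
  else Kf n L (i/3) * sf n L (i/3)

def lof (n : ℕ) (i : ℕ) : ℕ := if i % 3 = 0 then jjf n (i/3) else 0

def hif (n : ℕ) (i : ℕ) : ℕ := if i % 3 = 1 then jjf n (i/3) - 1 else n - 1

section Evals
variable {i : ℕ}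

lemma tauf0 (h : i % 3 = 0) : tauf n L i = n * sf n L (i/3) := by simp [tauf, h]
lemma tauf1 (h : i % 3 = 1) : tauf n L i = jjf n (i/3) * sf n L (i/3) / wf n L (i/3) := by
  simp [tauf, h]
lemma tauf2 (h : i % 3 = 2) : tauf n L i = n * (Kf n L (i/3) * sf n L (i/3)) := by
  simp [tauf, h]
lemma cf0 (h : i % 3 = 0) (p : Fin n) : cf n L i p = sf n L (i/3) := by simp [cf, h]
lemma cf1 (h : i % 3 = 1) (p : Fin n) : cf n L i p =
    (if (p:ℕ) < jjf n (i/3) then sf n L (i/3) else Kf n L (i/3) * sf n L (i/3)) := by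
  simp [cf, h]
lemma cf2 (h : i % 3 = 2) (p : Fin n) : cf n L i p = Kf n L (i/3) * sf n L (i/3) := by
  simp [cf, h]
lemma lof0 (h : i % 3 = 0) : lof n i = jjf n (i/3) := by simp [lof, h]
lemma lof1 (h : i % 3 = 1) : lof n i = 0 := by simp [lof, h]
lemma lof2 (h : i % 3 = 2) : lof n i = 0 := by simp [lof, h]
lemma hif0 (h : i % 3 = 0) : hif n i = n - 1 := by simp [hif, h]
lemma hif1 (h : i % 3 = 1) : hif n i = jjf n (i/3) - 1 := by simp [hif, h]
lemma hif2 (h : i % 3 = 2) : hif n i = n - 1 := by simp [hif, h]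

end Evals

lemma sum_ite_thr {n : ℕ} (j : ℕ) (hj : j ≤ n) (a b : ℝ) :
    ∑ p : Fin n, (if (p:ℕ) < j then a else b) = j * a + ((n:ℝ) - j) * b := by
  rw [Fin.sum_univ_eq_sum_range (fun k => if k < j then a else b) n]
  rw [← Finset.sum_range_add_sum_Ico _ hj]
  have h1 : ∑ k ∈ Finset.range j, (if k < j then a else b) = (j:ℝ) * a := by
    rw [Finset.sum_congr rfl (fun k hk => if_pos (Finset.mem_range.1 hk)),
      Finset.sum_const, Finset.card_range, nsmul_eq_mul]
  have h2 : ∑ k ∈ Finset.Ico j n, (if k < j then a else b) = ((n:ℝ) - j) * b := by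
    rw [Finset.sum_congr rfl (fun k hk => if_neg (by
      have := (Finset.mem_Ico.1 hk).1; omega)),
      Finset.sum_const, Nat.card_Ico, nsmul_eq_mul, Nat.cast_sub hj]
  rw [h1, h2]

section Keys
variable (hn : 2 ≤ n) (hL0 : ∀ j, 0 ≤ L j)

include hn hL0 in
lemma keyE1 (m : ℕ) : Kf n L m * sf n L m
    = sf n L m + (jjf n m * sf n L m / wf n L m - n * sf n L m) * (1/((n:ℝ) - jjf n m)) := by
  have hwp := hw_pos hn hL0 (L := L) m
  have hj := hjjlt (n := n) hn m
  have hw' : wf n L m ≠ 0 := ne_of_gt hwp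
  have hnj : (n:ℝ) - jjf n m ≠ 0 := by linarith
  unfold Kf
  field_simp
  ring

include hn hL0 in
lemma keyE2 (m : ℕ) : Kf n L m * sf n L m
    = sf n L m + (n * (Kf n L m * sf n L m) - jjf n m * sf n L m / wf n L m)
        * (1/(jjf n m : ℝ)) := by
  have hwp := hw_pos hn hL0 (L := L) m
  have hj := hjjlt (n := n) hn m
  have hj1 : (1:ℝ) ≤ (jjf n m : ℝ) := by exact_mod_cast hjj1 (n := n) m
  have hw' : wf n L m ≠ 0 := ne_of_gt hwp
  have hnj : (n:ℝ) - jjf n m ≠ 0 := by linarith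
  have hjne : (jjf n m : ℝ) ≠ 0 := by linarith
  unfold Kf
  field_simp
  ring

include hn hL0 in
lemma keyS (m : ℕ) : (jjf n m : ℝ) * sf n L m + ((n:ℝ) - jjf n m) * (Kf n L m * sf n L m)
    = jjf n m * sf n L m / wf n L m := by
  have hwp := hw_pos hn hL0 (L := L) m
  have hj := hjjlt (n := n) hn m
  have hw' : wf n L m ≠ 0 := ne_of_gt hwp
  have hnj : (n:ℝ) - jjf n m ≠ 0 := by linarith
  unfold Kf
  field_simp
  ring

include hn hL0 in
lemma hT01 (m : ℕ) : n * sf n L m < jjf n m * sf n L m / wf n L m := by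
  have hwp := hw_pos hn hL0 (L := L) m
  have hsp := hs_pos hn hL0 (L := L) m
  have hlt := hw_lt hn hL0 (L := L) m
  rw [lt_div_iff₀ hwp]
  nlinarith

include hn hL0 in
lemma hT12 (m : ℕ) : jjf n m * sf n L m / wf n L m < n * (Kf n L m * sf n L m) := by
  have hwp := hw_pos hn hL0 (L := L) m
  have hsp := hs_pos hn hL0 (L := L) m
  have hlt := hw_lt hn hL0 (L := L) m
  have hj := hjjlt (n := n) hn m
  rw [div_lt_iff₀ hwp]
  -- jj * s < n * (K * s) * w ; with K = jj(1-w)/((n-jj)w)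
  have hK : Kf n L m * (((n:ℝ) - jjf n m) * wf n L m) = (jjf n m) * (1 - wf n L m) :=
    div_mul_cancel₀ _ (ne_of_gt (hden_pos hn hL0 m))
  have hK2 : Kf n L m * (((n:ℝ) - jjf n m) * wf n L m) * sf n L m
      = (jjf n m) * (1 - wf n L m) * sf n L m := by rw [hK]
  have hw1 := hw_lt1 hn hL0 (L := L) m
  have hK1 := hK_gt1 hn hL0 (L := L) m
  have hjpos : (0:ℝ) < (jjf n m : ℝ) := by
    have := hjj1 (n := n) m
    have : (1:ℝ) ≤ (jjf n m : ℝ) := by exact_mod_cast this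
    linarith
  nlinarith [mul_pos (mul_pos (mul_pos hjpos hwp) hsp) (sub_pos.2 hK1), hK2]

end Keys

def SD (n : ℕ) (L : ℕ → ℝ) (hn : 2 ≤ n) (hL0 : ∀ j, 0 ≤ L j) : SegData n where
  tau := tauf n L
  lo := lof n
  hi := hif n
  c := cf n L
  lo_le_hi := by
    intro i
    have h3 : i % 3 = 0 ∨ i % 3 = 1 ∨ i % 3 = 2 := by omega
    have hj2 := hjj2 (n := n) hn (i/3)
    rcases h3 with h | h | h
    · rw [lof0 h, hif0 h]; exact hj2
    · rw [lof1 h, hif1 h]; omega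
    · rw [lof2 h, hif2 h]; omega
  hi_lt := by
    intro i
    have h3 : i % 3 = 0 ∨ i % 3 = 1 ∨ i % 3 = 2 := by omega
    have hj2 := hjj2 (n := n) hn (i/3)
    rcases h3 with h | h | h
    · rw [hif0 h]; omega
    · rw [hif1 h]; omega
    · rw [hif2 h]; omega
  smono := by
    apply strictMono_nat_of_lt_succ
    intro i
    have h3 : i % 3 = 0 ∨ i % 3 = 1 ∨ i % 3 = 2 := by omega
    rcases h3 with h | h | h
    · have hd : (i+1) % 3 = 1 ∧ (i+1)/3 = i/3 := by omega
      rw [tauf0 h, tauf1 hd.1, hd.2]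
      exact hT01 hn hL0 (i/3)
    · have hd : (i+1) % 3 = 2 ∧ (i+1)/3 = i/3 := by omega
      rw [tauf1 h, tauf2 hd.1, hd.2]
      exact hT12 hn hL0 (i/3)
    · have hd : (i+1) % 3 = 0 ∧ (i+1)/3 = i/3 + 1 := by omega
      rw [tauf2 h, tauf0 hd.1, hd.2, sf_succ]
      have hsp := hs_pos hn hL0 (L := L) (i/3)
      have hKp := hK_pos hn hL0 (L := L) (i/3)
      have hnp : (0:ℝ) < n := by
        have : 0 < n := by omega
        exact_mod_cast this
      nlinarith [mul_pos hnp (mul_pos hKp hsp)]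
  tau0 := by
    rw [tauf0 (by norm_num)]
    norm_num
    show (n:ℝ) * sf n L 0 = 1
    unfold sf
    have hnp : (n:ℝ) ≠ 0 := by
      have : 0 < n := by omega
      positivity
    field_simp
  tends := by
    apply tendsto_atTop_atTop_of_monotone
    · -- monotone
      have : StrictMono (tauf n L) := by
        apply strictMono_nat_of_lt_succ
        intro i
        have h3 : i % 3 = 0 ∨ i % 3 = 1 ∨ i % 3 = 2 := by omega
        rcases h3 with h | h | h
        · have hd : (i+1) % 3 = 1 ∧ (i+1)/3 = i/3 := by omega
          rw [tauf0 h, tauf1 hd.1, hd.2]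
          exact hT01 hn hL0 (i/3)
        · have hd : (i+1) % 3 = 2 ∧ (i+1)/3 = i/3 := by omega
          rw [tauf1 h, tauf2 hd.1, hd.2]
          exact hT12 hn hL0 (i/3)
        · have hd : (i+1) % 3 = 0 ∧ (i+1)/3 = i/3 + 1 := by omega
          rw [tauf2 h, tauf0 hd.1, hd.2, sf_succ]
          have hsp := hs_pos hn hL0 (L := L) (i/3)
          have hKp := hK_pos hn hL0 (L := L) (i/3)
          have hnp : (0:ℝ) < n := by
            have : 0 < n := by omega
            exact_mod_cast this
          nlinarith [mul_pos hnp (mul_pos hKp hsp)]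
      exact this.monotone
    · intro b
      obtain ⟨m, hm⟩ := pow_unbounded_of_one_lt b (one_lt_two (α := ℝ))
      refine ⟨3*m, ?_⟩
      have h0 : (3*m) % 3 = 0 := by omega
      have h1 : (3*m) / 3 = m := by omega
      rw [tauf0 h0, h1]
      have := hs_ge hn hL0 (L := L) m
      have hnp : (0:ℝ) < n := by
        have : 0 < n := by omega
        exact_mod_cast this
      have : (2:ℝ)^m ≤ n * sf n L m := by
        have h2 := mul_le_mul_of_nonneg_left this hnp.le
        calc (2:ℝ)^m = n * ((2:ℝ)^m / n) := by field_simp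
          _ ≤ n * sf n L m := h2
      linarith
  sumc := by
    intro i
    have h3 : i % 3 = 0 ∨ i % 3 = 1 ∨ i % 3 = 2 := by omega
    have hnn : 1 ≤ n := by omega
    rcases h3 with h | h | h
    · rw [tauf0 h]
      rw [Finset.sum_congr rfl (fun p _ => cf0 h p), Finset.sum_const, Finset.card_univ,
        Fintype.card_fin, nsmul_eq_mul]
    · rw [tauf1 h]
      rw [Finset.sum_congr rfl (fun p _ => cf1 h p)]
      have hj2 := hjj2 (n := n) hn (i/3)
      rw [sum_ite_thr (jjf n (i/3)) (by omega)]
      exact keyS hn hL0 (i/3)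
    · rw [tauf2 h]
      rw [Finset.sum_congr rfl (fun p _ => cf2 h p), Finset.sum_const, Finset.card_univ,
        Fintype.card_fin, nsmul_eq_mul]
  nonneg0 := by
    intro p
    rw [cf0 (by norm_num) p]
    have := hs_pos hn hL0 (L := L) (0/3)
    linarith
  monoc := by
    intro i p p' hpp'
    have hpv : (p:ℕ) ≤ (p':ℕ) := hpp'
    have h3 : i % 3 = 0 ∨ i % 3 = 1 ∨ i % 3 = 2 := by omega
    rcases h3 with h | h | h
    · rw [cf0 h, cf0 h]
    · rw [cf1 h p, cf1 h p']
      have hsp := hs_pos hn hL0 (L := L) (i/3)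
      have hK1 := hK_gt1 hn hL0 (L := L) (i/3)
      by_cases hc : (p':ℕ) < jjf n (i/3)
      · rw [if_pos (by omega), if_pos hc]
      · rw [if_neg hc]
        by_cases hc2 : (p:ℕ) < jjf n (i/3)
        · rw [if_pos hc2]; nlinarith
        · rw [if_neg hc2]
    · rw [cf2 h, cf2 h]
  crec := by
    intro i p
    have h3 : i % 3 = 0 ∨ i % 3 = 1 ∨ i % 3 = 2 := by omega
    have hj1 := hjj1 (n := n) (i/3)
    have hj2 := hjj2 (n := n) hn (i/3)
    rcases h3 with h | h | h
    · have hd : (i+1) % 3 = 1 ∧ (i+1)/3 = i/3 := by omega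
      rw [cf1 hd.1 p, hd.2, cf0 h p, tauf0 h, tauf1 hd.1, hd.2]
      unfold sl
      rw [lof0 h, hif0 h]
      by_cases hc : (p:ℕ) < jjf n (i/3)
      · rw [if_pos hc, if_neg (by omega)]
        ring
      · rw [if_neg hc, if_pos (by
          constructor
          · omega
          · have := p.2; omega)]
        have hcast : ((n - 1 - jjf n (i/3) : ℕ):ℝ) + 1 = (n:ℝ) - jjf n (i/3) := by
          rw [Nat.cast_sub (by omega : jjf n (i/3) ≤ n - 1), Nat.cast_sub (by omega : 1 ≤ n)]
          push_cast
          ring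
        rw [hcast]
        exact keyE1 hn hL0 (i/3)
    · have hd : (i+1) % 3 = 2 ∧ (i+1)/3 = i/3 := by omega
      rw [cf2 hd.1 p, hd.2, cf1 h p, tauf1 h, tauf2 hd.1, hd.2]
      unfold sl
      rw [lof1 h, hif1 h]
      by_cases hc : (p:ℕ) < jjf n (i/3)
      · rw [if_pos hc, if_pos (by omega)]
        have hcast : ((jjf n (i/3) - 1 - 0 : ℕ):ℝ) + 1 = (jjf n (i/3) : ℝ) := by
          rw [Nat.sub_zero, Nat.cast_sub (by omega : 1 ≤ jjf n (i/3))]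
          push_cast
          ring
        rw [hcast]
        exact keyE2 hn hL0 (i/3)
      · rw [if_neg hc, if_neg (by omega)]
        ring
    · have hd : (i+1) % 3 = 0 ∧ (i+1)/3 = i/3 + 1 := by omega
      rw [cf0 hd.1 p, hd.2, cf2 h p, tauf2 h, tauf0 hd.1, hd.2, sf_succ]
      unfold sl
      rw [lof2 h, hif2 h]
      rw [if_pos (by
        constructor
        · omega
        · have := p.2; omega)]
      have hcast : ((n - 1 - 0 : ℕ):ℝ) + 1 = (n:ℝ) := by
        rw [Nat.sub_zero, Nat.cast_sub (by omega : 1 ≤ n)]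
        push_cast
        ring
      rw [hcast]
      have hnp : (n:ℝ) ≠ 0 := by
        have : 0 < n := by omega
        positivity
      field_simp
      ring
  eqblock := by
    intro i p r hp1 hp2 hr
    have h3 : i % 3 = 0 ∨ i % 3 = 1 ∨ i % 3 = 2 := by omega
    rcases h3 with h | h | h
    · rw [cf0 h, cf0 h]
    · rw [cf1 h p, cf1 h r]
      rw [hif1 h] at hp2
      rw [lof1 h] at hr
      have hj1 := hjj1 (n := n) (i/3)
      rw [if_pos (by omega), if_pos (by omega)]
    · rw [cf2 h, cf2 h]
  g3c := by
    intro i p r htrig hp1 hp2 hr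
    have h3 : i % 3 = 0 ∨ i % 3 = 1 ∨ i % 3 = 2 := by omega
    rcases h3 with h | h | h
    · exfalso
      have hd : (i+1) % 3 = 1 ∧ (i+1)/3 = i/3 := by omega
      rw [lof0 h, hif1 hd.1, hd.2] at htrig
      have hj1 := hjj1 (n := n) (i/3)
      omega
    · have hd : (i+1) % 3 = 2 := by omega
      rw [cf2 hd, cf2 hd]
    · have hd : (i+1) % 3 = 0 := by omega
      rw [cf0 hd, cf0 hd]


-- ==== boundary values and bounds ====
section Bounds
variable (hn : 2 ≤ n) (hL0 : ∀ j, 0 ≤ L j)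
    (hL2 : ∀ j, 1 ≤ j → j ≤ n - 1 → (n:ℝ) * L j ≤ j)
    (hF3 : ∀ j' j : ℕ, 1 ≤ j' → j' ≤ j → j ≤ n - 1 → (j:ℝ) * L j' ≤ (j':ℝ) * L j)
    (hF4 : ∀ j j' : ℕ, 1 ≤ j → j ≤ j' → j' ≤ n - 1 →
      ((n:ℝ) - j) * L j' ≤ ((n:ℝ) - j') * L j + ((j':ℝ) - j))

lemma psi_cf0 {i : ℕ} (j : ℕ) (h : i % 3 = 0) (hj : j ≤ n) :
    psiSum n j (cf n L i) = j * sf n L (i/3) := by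
  rw [psiSum_congr n j (cf0 h), psiSum_const n j hj]

lemma psi_cf2 {i : ℕ} (j : ℕ) (h : i % 3 = 2) (hj : j ≤ n) :
    psiSum n j (cf n L i) = j * (Kf n L (i/3) * sf n L (i/3)) := by
  rw [psiSum_congr n j (cf2 h), psiSum_const n j hj]

lemma psi_cf1_le {i : ℕ} (j : ℕ) (h : i % 3 = 1) (hj : j ≤ n) (hle : j ≤ jjf n (i/3)) :
    psiSum n j (cf n L i) = j * sf n L (i/3) := by
  rw [psiSum_congr n j (cf1 h), psiSum_thr_le n j (jjf n (i/3)) hj hle]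

lemma psi_cf1_ge {i : ℕ} (j : ℕ) (h : i % 3 = 1) (hj : j ≤ n) (hge : jjf n (i/3) ≤ j) :
    psiSum n j (cf n L i) = (jjf n (i/3) : ℝ) * sf n L (i/3)
      + ((j:ℝ) - jjf n (i/3)) * (Kf n L (i/3) * sf n L (i/3)) := by
  rw [psiSum_congr n j (cf1 h), psiSum_thr_ge n j (jjf n (i/3)) hj hge]

include hn hL2 in
lemma hL_le1 (j : ℕ) (h1 : 1 ≤ j) (h2 : j ≤ n - 1) : L j ≤ 1 := by
  have := hL2 j h1 h2
  have hj : (j:ℝ) ≤ n := by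
    have : j ≤ n := by omega
    exact_mod_cast this
  have hnp : (0:ℝ) < n := by
    have : 0 < n := by omega
    exact_mod_cast this
  nlinarith

include hn hL0 hL2 hF3 in
lemma dipA_low (m j : ℕ) (h1 : 1 ≤ j) (h2 : j ≤ jjf n m) :
    (L j - epsf m) * (jjf n m : ℝ) ≤ (j : ℝ) * wf n L m := by
  have hF := hF3 j (jjf n m) h1 h2 (hjj2 (n := n) hn m)
  have hw := hwL hn hL2 m
  have hw1 := hw_lt1 hn hL0 (L := L) m
  have he := heps m
  have hwp := hw_pos hn hL0 (L := L) m
  have hjle : (j:ℝ) ≤ (jjf n m : ℝ) := by exact_mod_cast h2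
  have hj0 : (0:ℝ) ≤ (j:ℝ) := Nat.cast_nonneg j
  have hjw : (j:ℝ) * wf n L m ≤ (jjf n m : ℝ) := by nlinarith
  have p1 : (j:ℝ) * L (jjf n m) ≤ (j:ℝ) * ((1 + epsf m) * wf n L m) :=
    mul_le_mul_of_nonneg_left hw hj0
  have p2 : epsf m * ((j:ℝ) * wf n L m) ≤ epsf m * (jjf n m : ℝ) :=
    mul_le_mul_of_nonneg_left hjw he.le
  nlinarith [hF, p1, p2]

include hn hL0 in
lemma dipA_up (m j : ℕ) (h2 : j ≤ jjf n m) :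
    (j : ℝ) * wf n L m * n ≤ (j:ℝ) * jjf n m := by
  have hlt := hw_lt hn hL0 (L := L) m
  have hj0 : (0:ℝ) ≤ (j:ℝ) := Nat.cast_nonneg j
  nlinarith [mul_le_mul_of_nonneg_left hlt.le hj0]

include hn hL0 hL2 hF4 in
lemma dipB_low (m j : ℕ) (h1 : jjf n m ≤ j) (h2 : j ≤ n - 1) :
    (L j - epsf m) * ((n:ℝ) - jjf n m)
      ≤ wf n L m * ((n:ℝ) - j) + ((j:ℝ) - jjf n m) := by
  have hF := hF4 (jjf n m) j (hjj1 (n := n) m) h1 h2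
  have hw := hwL hn hL2 m
  have hw1 := hw_lt1 hn hL0 (L := L) m
  have he := heps m
  have hwp := hw_pos hn hL0 (L := L) m
  have hjle : (jjf n m : ℝ) ≤ (j : ℝ) := by exact_mod_cast h1
  have hjn : (j:ℝ) ≤ (n:ℝ) - 1 := by
    have h3 : ((j:ℕ):ℝ) ≤ ((n-1:ℕ):ℝ) := Nat.cast_le.2 h2
    rwa [Nat.cast_sub (by omega), Nat.cast_one] at h3
  have hnj0 : (0:ℝ) ≤ (n:ℝ) - j := by linarith
  have p1 : ((n:ℝ) - j) * L (jjf n m) ≤ ((n:ℝ) - j) * ((1 + epsf m) * wf n L m) :=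
    mul_le_mul_of_nonneg_left hw hnj0
  have hinner : ((n:ℝ) - j) * wf n L m ≤ (n:ℝ) - jjf n m := by nlinarith
  have p2 : epsf m * (((n:ℝ) - j) * wf n L m) ≤ epsf m * ((n:ℝ) - jjf n m) :=
    mul_le_mul_of_nonneg_left hinner he.le
  nlinarith [hF, p1, p2]

include hn hL0 in
lemma dipB_up (m j : ℕ) (h1 : jjf n m ≤ j) (h2 : j ≤ n - 1) :
    (wf n L m * ((n:ℝ) - j) + ((j:ℝ) - jjf n m)) * n ≤ (j:ℝ) * ((n:ℝ) - jjf n m) := by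
  have hlt := hw_lt hn hL0 (L := L) m
  have hjn : (j:ℝ) ≤ (n:ℝ) - 1 := by
    have h3 : ((j:ℕ):ℝ) ≤ ((n-1:ℕ):ℝ) := Nat.cast_le.2 h2
    rwa [Nat.cast_sub (by omega), Nat.cast_one] at h3
  have hnj0 : (0:ℝ) ≤ (n:ℝ) - j := by linarith
  nlinarith [mul_nonneg hnj0 (sub_nonneg.2 hlt.le)]

include hn hL0 in
lemma PsiB_id (m : ℕ) (j : ℕ) :
    ((jjf n m : ℝ) * sf n L m + ((j:ℝ) - jjf n m) * (Kf n L m * sf n L m))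
        * (wf n L m * ((n:ℝ) - jjf n m))
      = ((jjf n m : ℝ) * sf n L m) * (wf n L m * ((n:ℝ) - j) + ((j:ℝ) - jjf n m)) := by
  have hK : Kf n L m * (((n:ℝ) - jjf n m) * wf n L m) = (jjf n m) * (1 - wf n L m) :=
    div_mul_cancel₀ _ (ne_of_gt (hden_pos hn hL0 m))
  linear_combination (((j:ℝ) - jjf n m) * sf n L m) * hK

include hn hL0 hL2 hF3 hF4 in
lemma bnd_low (i j : ℕ) (h1 : 1 ≤ j) (h2 : j ≤ n-1) :
    (L j - epsf (i/3)) * tauf n L i ≤ psiSum n j (cf n L i) := by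
  set m := i / 3 with hm
  have hsp := hs_pos hn hL0 (L := L) m
  have hnp : (0:ℝ) < n := by
    have : 0 < n := by omega
    exact_mod_cast this
  have he := heps m
  have hLn := hL2 j h1 h2
  have hjn : j ≤ n := by omega
  have h3 : i % 3 = 0 ∨ i % 3 = 1 ∨ i % 3 = 2 := by omega
  rcases h3 with h | h | h
  · rw [psi_cf0 j h hjn, tauf0 h]
    have hsc : (L j - epsf m) * (n:ℝ) ≤ (j:ℝ) := by nlinarith
    nlinarith [mul_le_mul_of_nonneg_right hsc hsp.le]
  · have hwp := hw_pos hn hL0 (L := L) m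
    rcases le_or_gt j (jjf n m) with hc | hc
    · rw [psi_cf1_le j h hjn hc, tauf1 h]
      rw [mul_div_assoc', div_le_iff₀ hwp]
      have := dipA_low hn hL0 hL2 hF3 m j h1 hc
      nlinarith [mul_le_mul_of_nonneg_right this hsp.le]
    · rw [psi_cf1_ge j h hjn (by rw [← hm]; omega), tauf1 h]
      rw [mul_div_assoc', div_le_iff₀ hwp]
      have hsc := dipB_low hn hL0 hL2 hF4 m j (by omega) h2
      have hid := PsiB_id hn hL0 (L := L) m j
      have hjj : (0:ℝ) < (n:ℝ) - jjf n m := by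
        have := hjjlt (n := n) hn m
        linarith
      have hjs : (0:ℝ) ≤ (jjf n m : ℝ) * sf n L m := by positivity
      have key : ((L j - epsf m) * ((jjf n m : ℝ) * sf n L m)) * ((n:ℝ) - jjf n m)
          ≤ (((jjf n m : ℝ) * sf n L m + ((j:ℝ) - jjf n m) * (Kf n L m * sf n L m))
              * wf n L m) * ((n:ℝ) - jjf n m) := by
        nlinarith [mul_le_mul_of_nonneg_right hsc hjs, hid]
      have := le_of_mul_le_mul_right (by linarith [key]) hjj
      nlinarith [this]
  · rw [psi_cf2 j h hjn, tauf2 h]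
    have hKp := hK_pos hn hL0 (L := L) m
    have hsc : (L j - epsf m) * (n:ℝ) ≤ (j:ℝ) := by nlinarith
    nlinarith [mul_le_mul_of_nonneg_right hsc (mul_pos hKp hsp).le]

include hn hL0 in
lemma bnd_up (i j : ℕ) (h1 : 1 ≤ j) (h2 : j ≤ n-1) :
    psiSum n j (cf n L i) ≤ ((j:ℝ)/n) * tauf n L i := by
  set m := i / 3 with hm
  have hsp := hs_pos hn hL0 (L := L) m
  have hnp : (0:ℝ) < n := by
    have : 0 < n := by omega
    exact_mod_cast this
  have hjn : j ≤ n := by omega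
  have h3 : i % 3 = 0 ∨ i % 3 = 1 ∨ i % 3 = 2 := by omega
  rcases h3 with h | h | h
  · rw [psi_cf0 j h hjn, tauf0 h]
    apply le_of_eq
    field_simp
  · have hwp := hw_pos hn hL0 (L := L) m
    have hnw : (0:ℝ) < (n:ℝ) * wf n L m := by positivity
    rcases le_or_gt j (jjf n m) with hc | hc
    · rw [psi_cf1_le j h hjn hc, tauf1 h]
      rw [div_mul_div_comm, le_div_iff₀ (by positivity)]
      have := dipA_up hn hL0 (L := L) m j hc
      nlinarith [mul_le_mul_of_nonneg_right this hsp.le]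
    · rw [psi_cf1_ge j h hjn (by rw [← hm]; omega), tauf1 h]
      rw [div_mul_div_comm, le_div_iff₀ (by positivity)]
      have hsc := dipB_up hn hL0 (L := L) m j (by omega) h2
      have hid := PsiB_id hn hL0 (L := L) m j
      have hjj : (0:ℝ) < (n:ℝ) - jjf n m := by
        have := hjjlt (n := n) hn m
        linarith
      have hjs : (0:ℝ) ≤ (jjf n m : ℝ) * sf n L m := by positivity
      have key : (((jjf n m : ℝ) * sf n L m + ((j:ℝ) - jjf n m) * (Kf n L m * sf n L m))
            * ((n:ℝ) * wf n L m)) * ((n:ℝ) - jjf n m)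
          ≤ ((j:ℝ) * ((jjf n m : ℝ) * sf n L m)) * ((n:ℝ) - jjf n m) := by
        nlinarith [mul_le_mul_of_nonneg_right hsc hjs, hid]
      have := le_of_mul_le_mul_right (by linarith [key]) hjj
      nlinarith [this]
  · rw [psi_cf2 j h hjn, tauf2 h]
    apply le_of_eq
    field_simp

end Bounds


-- ==== main construction theorem ====
section Limits
open Filter

variable (hn : 2 ≤ n) (hL0 : ∀ j, 0 ≤ L j)
    (hL2 : ∀ j, 1 ≤ j → j ≤ n - 1 → (n:ℝ) * L j ≤ j)
    (hF3 : ∀ j' j : ℕ, 1 ≤ j' → j' ≤ j → j ≤ n - 1 → (j:ℝ) * L j' ≤ (j':ℝ) * L j)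
    (hF4 : ∀ j j' : ℕ, 1 ≤ j → j ≤ j' → j' ≤ n - 1 →
      ((n:ℝ) - j) * L j' ≤ ((n:ℝ) - j') * L j + ((j':ℝ) - j))

include hn hL0 in
lemma tau3m_ge (m : ℕ) : (2:ℝ)^m ≤ tauf n L (3*m) := by
  have h0 : (3*m) % 3 = 0 := by omega
  have h1 : (3*m) / 3 = m := by omega
  rw [tauf0 h0, h1]
  have := hs_ge hn hL0 (L := L) m
  have hnp : (0:ℝ) < n := by
    have : 0 < n := by omega
    exact_mod_cast this
  have h2 := mul_le_mul_of_nonneg_left this hnp.le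
  calc (2:ℝ)^m = n * ((2:ℝ)^m / n) := by field_simp
    _ ≤ n * sf n L m := h2

include hn hL0 hL2 hF3 hF4 in
theorem construction_main :
    ∃ P : ℝ → Fin n → ℝ, IsGenNSystem n (Set.Ici 1) P ∧
      (∀ q : ℝ, 1 ≤ q → ∑ p, P q p = q) ∧
      ∀ j : ℕ, 1 ≤ j → j ≤ n - 1 →
        Filter.liminf (fun q : ℝ => psiSum n j (fun p => P q p / q)) Filter.atTop = L j ∧
        Filter.limsup (fun q : ℝ => psiSum n j (fun p => P q p / q)) Filter.atTop = (j:ℝ)/n := by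
  set S := SD n L hn hL0 with hSdef
  have hStau : S.tau = tauf n L := rfl
  have hSc : S.c = cf n L := rfl
  refine ⟨S.P, S.isGenNSystem, fun q hq => (S.g1 q hq).2, ?_⟩
  intro j h1 h2
  set F : ℝ → ℝ := fun q => psiSum n j (fun p => S.P q p / q) with hFdef
  have hnp : (0:ℝ) < n := by
    have : 0 < n := by omega
    exact_mod_cast this
  have hjn : j ≤ n := by omega
  -- basic value facts
  have hFval : ∀ q : ℝ, F q = psiSum n j (S.P q) / q := fun q => psiSum_div n j _ q
  have hF0 : ∀ q : ℝ, 1 ≤ q → 0 ≤ F q := by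
    intro q hq
    rw [hFval]
    apply div_nonneg _ (by linarith)
    exact psiSum_nonneg n j _ (fun p => ((S.g1 q hq).1.1 p))
  have hF1 : ∀ q : ℝ, 1 ≤ q → F q ≤ 1 := by
    intro q hq
    rw [hFval]
    rw [div_le_one (by linarith : (0:ℝ) < q)]
    calc psiSum n j (S.P q) ≤ ∑ p, S.P q p :=
          psiSum_le_total n j _ (fun p => ((S.g1 q hq).1.1 p))
      _ = q := (S.g1 q hq).2
  -- indexing fact
  have hidx : ∀ q : ℝ, 1 ≤ q → S.tau (S.idx q) ≤ q ∧ q ≤ S.tau (S.idx q + 1) := by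
    intro q hq
    constructor
    · have := S.tau_idx_le q; rwa [max_eq_right hq] at this
    · have := S.lt_tau_idx_succ q; rw [max_eq_right hq] at this; exact this.le
  -- upper bound everywhere
  have hup : ∀ q : ℝ, 1 ≤ q → F q ≤ (j:ℝ)/n := by
    intro q hq
    obtain ⟨ha, hb⟩ := hidx q hq
    have e1 : psiSum n j (S.c (S.idx q)) ≤ ((j:ℝ)/n) * S.tau (S.idx q) := by
      rw [hSc, hStau]; exact bnd_up hn hL0 (S.idx q) j h1 h2
    have e2 : psiSum n j (S.c (S.idx q + 1)) ≤ ((j:ℝ)/n) * S.tau (S.idx q + 1) := by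
      rw [hSc, hStau]; exact bnd_up hn hL0 (S.idx q + 1) j h1 h2
    have := S.seg_upper (S.idx q) j ((j:ℝ)/n) e1 e2 ha hb
    rw [hFval, div_le_iff₀ (by linarith : (0:ℝ) < q)]
    linarith [this]
  -- lower tail bound
  have hlow : ∀ M : ℕ, ∀ q : ℝ, tauf n L (3*M) ≤ q → L j - epsf M ≤ F q := by
    intro M q hqM
    have hq1 : (1:ℝ) ≤ q := le_trans (by rw [← hStau]; exact S.one_le_tau (3*M)) hqM
    obtain ⟨ha, hb⟩ := hidx q hq1
    set i := S.idx q with hidef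
    have hiM : 3*M ≤ i := S.idx_ge (by rw [hStau]; exact hqM)
    have hMm : M ≤ i/3 := by omega
    have hMm1 : M ≤ (i+1)/3 := by omega
    have hmm : i/3 ≤ (i+1)/3 := by omega
    have e1 : (L j - epsf (i/3)) * S.tau i ≤ psiSum n j (S.c i) := by
      rw [hSc, hStau]; exact bnd_low hn hL0 hL2 hF3 hF4 i j h1 h2
    have e2 : (L j - epsf (i/3)) * S.tau (i+1) ≤ psiSum n j (S.c (i+1)) := by
      have b2 : (L j - epsf ((i+1)/3)) * S.tau (i+1) ≤ psiSum n j (S.c (i+1)) := by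
        rw [hSc, hStau]; exact bnd_low hn hL0 hL2 hF3 hF4 (i+1) j h1 h2
      have : epsf ((i+1)/3) ≤ epsf (i/3) := heps_anti _ _ hmm
      have htp := S.tau_pos (i+1)
      nlinarith [b2]
    have := S.seg_lower i j (L j - epsf (i/3)) e1 e2 ha hb
    have heM : epsf (i/3) ≤ epsf M := heps_anti _ _ hMm
    rw [hFval, le_div_iff₀ (by linarith : (0:ℝ) < q)]
    nlinarith [this]
  -- epsf smallness
  have heps_small : ∀ ε : ℝ, 0 < ε → ∃ M : ℕ, epsf M ≤ ε := by
    intro ε hε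
    obtain ⟨M, hM⟩ := exists_nat_gt (1/ε)
    refine ⟨M, ?_⟩
    unfold epsf
    rw [div_le_iff₀ (by positivity)]
    have h0 : 1/ε < (M:ℝ) := hM
    have h1 : 1 < ε * M := by
      rw [div_lt_iff₀ hε] at h0
      linarith [h0]
    nlinarith
  -- boundedness packages
  have hbdd_ge : IsBoundedUnder (· ≥ ·) atTop F :=
    isBoundedUnder_of_eventually_ge
      ((eventually_ge_atTop (1:ℝ)).mono (fun q hq => hF0 q hq))
  have hbdd_le : IsBoundedUnder (· ≤ ·) atTop F :=
    isBoundedUnder_of_eventually_le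
      ((eventually_ge_atTop (1:ℝ)).mono (fun q hq => hF1 q hq))
  have hcob_ge : IsCoboundedUnder (· ≥ ·) atTop F := hbdd_le.isCoboundedUnder_ge
  have hcob_le : IsCoboundedUnder (· ≤ ·) atTop F := hbdd_ge.isCoboundedUnder_le
  constructor
  · -- liminf = L j
    have hge : L j ≤ liminf F atTop := by
      by_contra hcon
      push_neg at hcon
      have hε : 0 < (L j - liminf F atTop)/2 := by linarith
      obtain ⟨M, hM⟩ := heps_small _ hε
      have hev : ∀ᶠ q in atTop, L j - (L j - liminf F atTop)/2 ≤ F q := by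
        filter_upwards [eventually_ge_atTop (tauf n L (3*M))] with q hq
        have := hlow M q hq
        linarith
      have := le_liminf_of_le hcob_ge hev
      linarith
    have hle : liminf F atTop ≤ L j := by
      by_contra hcon
      push_neg at hcon
      have hε : 0 < (liminf F atTop - L j)/2 := by linarith
      obtain ⟨M, hM⟩ := heps_small _ hε
      have hfreq : ∃ᶠ q in atTop, F q ≤ L j + (liminf F atTop - L j)/2 := by
        rw [frequently_atTop]
        intro N
        obtain ⟨T, hT⟩ := exists_nat_ge N
        set t := max M T with htdef
        set m := (j-1) + (n-1)*t with hmdef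
        have hjm : jjf n m = j := by
          unfold jjf
          have : m % (n-1) = j-1 := by
            rw [hmdef]
            rw [Nat.add_mul_mod_self_left]
            exact Nat.mod_eq_of_lt (by omega)
          omega
        have hmM : M ≤ m := by
          have : t ≤ m := by
            rw [hmdef]
            have : 1 * t ≤ (n-1) * t := Nat.mul_le_mul_right t (by omega)
            omega
          omega
        refine ⟨tauf n L (3*m+1), ?_, ?_⟩
        · -- tauf (3m+1) ≥ N
          have g1 : (2:ℝ)^m ≤ tauf n L (3*m) := tau3m_ge hn hL0 m
          have g2 : tauf n L (3*m) ≤ tauf n L (3*m+1) := by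
            rw [← hStau]
            exact (S.smono (by omega)).le
          have g3 : (m:ℝ) + 1 ≤ (2:ℝ)^m := by
            have := Nat.lt_two_pow_self (n := m)
            have hc : ((m+1 : ℕ):ℝ) ≤ ((2^m : ℕ):ℝ) := Nat.cast_le.2 (by omega)
            push_cast at hc
            linarith
          have g4 : N ≤ (m:ℝ) := by
            have : (T:ℝ) ≤ m := by
              have : T ≤ m := by
                have : t ≤ m := by
                  rw [hmdef]
                  have : 1 * t ≤ (n-1) * t := Nat.mul_le_mul_right t (by omega)
                  omega
                omega
              exact_mod_cast this
            linarith [hT]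
          linarith
        · -- value ≤ L j + ...
          have h31 : (3*m+1) % 3 = 1 := by omega
          have h32 : (3*m+1) / 3 = m := by omega
          have hPtau : S.P (tauf n L (3*m+1)) = cf n L (3*m+1) := by
            rw [← hSc, ← hStau]; exact S.P_tau (3*m+1)
          have hval : psiSum n j (cf n L (3*m+1)) = j * sf n L m := by
            have := psi_cf1_le (L := L) (i := 3*m+1) j h31 hjn (by rw [h32, hjm])
            rwa [h32] at this
          have htv : tauf n L (3*m+1) = (j:ℝ) * sf n L m / wf n L m := by
            rw [tauf1 h31, h32, hjm]
          have hwp := hw_pos hn hL0 (L := L) m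
          have hsp := hs_pos hn hL0 (L := L) m
          have hFt : F (tauf n L (3*m+1)) = wf n L m := by
            rw [hFval, hPtau, hval, htv]
            have hjs : ((j:ℝ) * sf n L m) ≠ 0 := by
              have hj0 : (0:ℝ) < (j:ℝ) := by exact_mod_cast h1
              positivity
            rw [div_div_eq_mul_div, mul_comm, mul_div_assoc, div_self hjs, mul_one]
          rw [hFt]
          have hwu := hwU (n := n) (L := L) m
          rw [hjm] at hwu
          have hem := heps m
          have hmE : epsf m ≤ epsf M := heps_anti _ _ hmM
          nlinarith [hwu, mul_nonneg hem.le hwp.le, hmE, hM]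
      have := liminf_le_of_frequently_le hfreq hbdd_ge
      linarith
    linarith [hge, hle]
  · -- limsup = j/n
    have hle : limsup F atTop ≤ (j:ℝ)/n := by
      apply limsup_le_of_le hcob_le
      filter_upwards [eventually_ge_atTop (1:ℝ)] with q hq
      exact hup q hq
    have hge : (j:ℝ)/n ≤ limsup F atTop := by
      apply le_limsup_of_frequently_le _ hbdd_le
      rw [frequently_atTop]
      intro N
      obtain ⟨T, hT⟩ := exists_nat_ge N
      refine ⟨tauf n L (3*T), ?_, ?_⟩
      · have g1 : (2:ℝ)^T ≤ tauf n L (3*T) := tau3m_ge hn hL0 T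
        have g3 : (T:ℝ) + 1 ≤ (2:ℝ)^T := by
          have := Nat.lt_two_pow_self (n := T)
          have hc : ((T+1 : ℕ):ℝ) ≤ ((2^T : ℕ):ℝ) := Nat.cast_le.2 (by omega)
          push_cast at hc
          linarith
        linarith
      · have h30 : (3*T) % 3 = 0 := by omega
        have h32 : (3*T) / 3 = T := by omega
        have hPtau : S.P (tauf n L (3*T)) = cf n L (3*T) := by
          rw [← hSc, ← hStau]; exact S.P_tau (3*T)
        have hval : psiSum n j (cf n L (3*T)) = j * sf n L T := by
          have := psi_cf0 (L := L) (i := 3*T) j h30 hjn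
          rwa [h32] at this
        have htv : tauf n L (3*T) = (n:ℝ) * sf n L T := by
          rw [tauf0 h30, h32]
        have hsp := hs_pos hn hL0 (L := L) T
        have : F (tauf n L (3*T)) = (j:ℝ)/n := by
          rw [hFval, hPtau, hval, htv]
          field_simp
        rw [this]
    linarith [hle, hge]

end Limits

end Construction

-- ===== assembly: facts about E and the final theorem =====
section Assembly
open Filter

variable {n : ℕ}

def ext (a : Fin n → ℝ) (k : ℕ) : ℝ := if h : k < n then a ⟨k, h⟩ else 0

lemma psiSum_eq_range (a : Fin n → ℝ) (j : ℕ) (hj : j ≤ n) :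
    psiSum n j a = ∑ k ∈ Finset.range j, ext a k := by
  have h2 := psiSum_range n j (ext a) hj
  rw [← h2]
  apply psiSum_congr
  intro p
  rw [ext, dif_pos p.2]

lemma psiSum_all (a : Fin n → ℝ) : psiSum n n a = ∑ p, a p := by
  unfold psiSum
  apply Finset.sum_congr rfl
  intro p _
  rw [if_pos p.2]

lemma block_le (a : Fin n → ℝ) (hmono : Monotone a) (x y z : ℕ)
    (hxy : x ≤ y) (hyz : y ≤ z) (hzn : z ≤ n) :
    ((z:ℝ) - y) * (∑ k ∈ Finset.Ico x y, ext a k)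
      ≤ ((y:ℝ) - x) * (∑ k ∈ Finset.Ico y z, ext a k) := by
  have h1 : ∀ k ∈ Finset.Ico y z, (∑ i ∈ Finset.Ico x y, ext a i) ≤ ((y:ℝ)-x) * ext a k := by
    intro k hk
    obtain ⟨hk1, hk2⟩ := Finset.mem_Ico.1 hk
    have hkn : k < n := by omega
    have hle : ∀ i ∈ Finset.Ico x y, ext a i ≤ ext a k := by
      intro i hi
      obtain ⟨hi1, hi2⟩ := Finset.mem_Ico.1 hi
      have hin : i < n := by omega
      rw [ext, ext, dif_pos hin, dif_pos hkn]
      exact hmono (show (⟨i,hin⟩ : Fin n) ≤ ⟨k,hkn⟩ from by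
        rw [Fin.mk_le_mk]; omega)
    calc ∑ i ∈ Finset.Ico x y, ext a i ≤ ∑ _i ∈ Finset.Ico x y, ext a k :=
          Finset.sum_le_sum hle
      _ = ((y:ℝ)-x) * ext a k := by
          rw [Finset.sum_const, Nat.card_Ico, nsmul_eq_mul, Nat.cast_sub hxy]
  have h2 := Finset.sum_le_sum h1
  rw [Finset.sum_const, Nat.card_Ico, nsmul_eq_mul, Nat.cast_sub hyz] at h2
  calc ((z:ℝ) - y) * (∑ k ∈ Finset.Ico x y, ext a k) ≤
        ∑ k ∈ Finset.Ico y z, ((y:ℝ)-x) * ext a k := h2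
    _ = ((y:ℝ) - x) * (∑ k ∈ Finset.Ico y z, ext a k) := by rw [← Finset.mul_sum]

lemma SB2 (a : Fin n → ℝ) (ha : a ∈ DeltaBar n) (j' j : ℕ) (hj' : j' ≤ j) (hj : j ≤ n) :
    (j:ℝ) * psiSum n j' a ≤ (j':ℝ) * psiSum n j a := by
  have hb := block_le a ha.2.1 0 j' j (by omega) hj' hj
  have hsplit : psiSum n j a = psiSum n j' a + ∑ k ∈ Finset.Ico j' j, ext a k := by
    rw [psiSum_eq_range a j hj, psiSum_eq_range a j' (by omega),
      ← Finset.sum_range_add_sum_Ico _ hj']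
  have hrange : psiSum n j' a = ∑ k ∈ Finset.Ico 0 j', ext a k := by
    rw [psiSum_eq_range a j' (by omega), Finset.range_eq_Ico]
  rw [hsplit, hrange]
  push_cast at hb ⊢
  nlinarith [hb]

lemma SB3 (a : Fin n → ℝ) (ha : a ∈ DeltaBar n) (j j' : ℕ) (hj : j ≤ j') (hj' : j' ≤ n) :
    ((n:ℝ) - j) * psiSum n j' a ≤ ((n:ℝ) - j') * psiSum n j a + ((j':ℝ) - j) := by
  have hb := block_le a ha.2.1 j j' n hj hj' (le_refl n)
  have hsplit1 : psiSum n j' a = psiSum n j a + ∑ k ∈ Finset.Ico j j', ext a k := by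
    rw [psiSum_eq_range a j' hj', psiSum_eq_range a j (by omega),
      ← Finset.sum_range_add_sum_Ico _ hj]
  have hsplit2 : (1:ℝ) = psiSum n j' a + ∑ k ∈ Finset.Ico j' n, ext a k := by
    rw [psiSum_eq_range a j' hj', Finset.sum_range_add_sum_Ico _ hj']
    rw [← psiSum_eq_range a n (le_refl n), psiSum_all]
    exact ha.2.2.symm
  nlinarith [hb, hsplit1, hsplit2]

end Assembly

theorem final_main (n : ℕ) (hn : 2 ≤ n)
    (E : Set (Fin n → ℝ)) (hE₀ : E.Nonempty) (hE₁ : E ⊆ DeltaBar n) :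
    ∃ P : ℝ → Fin n → ℝ, IsGenNSystem n (Set.Ici 1) P ∧
      ∀ j : ℕ, 1 ≤ j → j ≤ n →
        Filter.liminf (fun q : ℝ => psiSum n j (fun i => P q i / q)) Filter.atTop
          = sInf (psiSum n j '' E) ∧
        Filter.limsup (fun q : ℝ => psiSum n j (fun i => P q i / q)) Filter.atTop
          = (j : ℝ) / n := by
  classical
  set L : ℕ → ℝ := fun j => sInf (psiSum n j '' E) with hLdef
  have hnp : (0:ℝ) < n := by
    have : 0 < n := by omega
    exact_mod_cast this
  have hne : ∀ j : ℕ, (psiSum n j '' E).Nonempty := fun j => hE₀.image _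
  have hbdd : ∀ j : ℕ, BddBelow (psiSum n j '' E) := by
    intro j
    refine ⟨0, ?_⟩
    rintro y ⟨a, ha, rfl⟩
    exact psiSum_nonneg n j a (hE₁ ha).1
  have hL0 : ∀ j, 0 ≤ L j := by
    intro j
    exact le_csInf (hne j) (by rintro y ⟨a, ha, rfl⟩; exact psiSum_nonneg n j a (hE₁ ha).1)
  have hLle : ∀ j : ℕ, ∀ a ∈ E, L j ≤ psiSum n j a := by
    intro j a ha
    exact csInf_le (hbdd j) ⟨a, ha, rfl⟩
  have hpsin : ∀ a ∈ E, psiSum n n a = 1 := by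
    intro a ha
    rw [psiSum_all]
    exact (hE₁ ha).2.2
  have hL2 : ∀ j, 1 ≤ j → j ≤ n - 1 → (n:ℝ) * L j ≤ j := by
    intro j h1 h2
    obtain ⟨a, ha⟩ := hE₀
    have e1 := SB2 a (hE₁ ha) j n (by omega) (le_refl n)
    rw [hpsin a ha, mul_one] at e1
    have e2 := hLle j a ha
    nlinarith
  have hF3 : ∀ j' j : ℕ, 1 ≤ j' → j' ≤ j → j ≤ n - 1 → (j:ℝ) * L j' ≤ (j':ℝ) * L j := by
    intro j' j h1 h2 h3
    have hj'p : (0:ℝ) < (j':ℝ) := by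
      have : 0 < j' := h1
      exact_mod_cast this
    have key : ∀ a ∈ E, (j:ℝ) * L j' / j' ≤ psiSum n j a := by
      intro a ha
      have e1 := hLle j' a ha
      have e2 := SB2 a (hE₁ ha) j' j h2 (by omega)
      rw [div_le_iff₀ hj'p]
      have hj0 : (0:ℝ) ≤ (j:ℝ) := Nat.cast_nonneg j
      nlinarith
    have : (j:ℝ) * L j' / j' ≤ L j :=
      le_csInf (hne j) (by rintro y ⟨a, ha, rfl⟩; exact key a ha)
    rw [div_le_iff₀ hj'p] at this
    nlinarith
  have hF4 : ∀ j j' : ℕ, 1 ≤ j → j ≤ j' → j' ≤ n - 1 →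
      ((n:ℝ) - j) * L j' ≤ ((n:ℝ) - j') * L j + ((j':ℝ) - j) := by
    intro j j' h1 h2 h3
    have hnj' : (0:ℝ) < (n:ℝ) - j' := by
      have h4 : ((j':ℕ):ℝ) ≤ ((n-1:ℕ):ℝ) := Nat.cast_le.2 h3
      rw [Nat.cast_sub (by omega), Nat.cast_one] at h4
      linarith
    have hnj : (0:ℝ) ≤ (n:ℝ) - j := by
      have h4 : ((j:ℕ):ℝ) ≤ ((n-1:ℕ):ℝ) := Nat.cast_le.2 (by omega)
      rw [Nat.cast_sub (by omega), Nat.cast_one] at h4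
      linarith
    have key : ∀ a ∈ E, (((n:ℝ) - j) * L j' - ((j':ℝ) - j)) / ((n:ℝ) - j')
        ≤ psiSum n j a := by
      intro a ha
      have e1 := hLle j' a ha
      have e2 := SB3 a (hE₁ ha) j j' h2 (by omega)
      rw [div_le_iff₀ hnj']
      nlinarith
    have : (((n:ℝ) - j) * L j' - ((j':ℝ) - j)) / ((n:ℝ) - j') ≤ L j :=
      le_csInf (hne j) (by rintro y ⟨a, ha, rfl⟩; exact key a ha)
    rw [div_le_iff₀ hnj'] at this
    nlinarith
  obtain ⟨P, hgen, hsum, hmain⟩ := construction_main hn hL0 hL2 hF3 hF4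
  refine ⟨P, hgen, ?_⟩
  intro j hj1 hj2
  rcases lt_or_eq_of_le hj2 with hlt | heq
  · exact hmain j hj1 (by omega)
  · subst heq
    have hev : ∀ᶠ q in (atTop : Filter ℝ),
        psiSum j j (fun p => P q p / q) = 1 := by
      filter_upwards [eventually_ge_atTop (1:ℝ)] with q hq
      rw [psiSum_div, psiSum_all, hsum q hq, div_self (by linarith : q ≠ 0)]
    have himg : psiSum j j '' E = {1} := by
      apply Set.Subset.antisymm
      · rintro y ⟨a, ha, rfl⟩
        exact hpsin a ha
      · rintro y hy
        obtain ⟨a, ha⟩ := hE₀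
        rw [hy]
        exact ⟨a, ha, hpsin a ha⟩
    constructor
    · rw [liminf_congr hev, liminf_const, himg, csInf_singleton]
    · rw [limsup_congr hev, limsup_const, div_self (by linarith : (j:ℝ) ≠ 0)]

end PropAux

/-- Proposition 5.4: for any nonempty `E ⊆ Δ̄⁽ⁿ⁾` there is a generalized
`n`-system `P` on `[1,∞)` with `liminf_{q→∞} ψ_j(q⁻¹P(q)) = inf ψ_j(E)` and
`limsup_{q→∞} ψ_j(q⁻¹P(q)) = j/n` for `j = 1,…,n`. -/
theorem exists_gen_nsystem_prescribed (n : ℕ) (hn : 2 ≤ n)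
    (E : Set (Fin n → ℝ)) (hE₀ : E.Nonempty) (hE₁ : E ⊆ DeltaBar n) :
    ∃ P : ℝ → Fin n → ℝ, IsGenNSystem n (Set.Ici 1) P ∧
      ∀ j : ℕ, 1 ≤ j → j ≤ n →
        Filter.liminf (fun q : ℝ => psiSum n j (fun i => P q i / q)) Filter.atTop
          = sInf (psiSum n j '' E) ∧
        Filter.limsup (fun q : ℝ => psiSum n j (fun i => P q i / q)) Filter.atTop
          = (j : ℝ) / n := by
  exact PropAux.final_main n hn E hE₀ hE₁

end
end

section
/- Let n ≥ 1 be an integer. Suppose that ψ̲₁, …, ψ̲_n ∈ [0, 1] satisfy ψ̲_n ≤ n/(n+1) and, for each j with 1 ≤ j ≤ n−1, ψ̲_j/j ≤ ψ̲_{j+1}/(j+1) and (1 − ψ̲_j)/(n+1−j) ≤ (1 − ψ̲_{j+1})/(n−j). Then there exists a finite non-empty subset E of Δ̄^(n+1) such that ψ̲_j = min ψ_j(E) for each j = 1, …, n. -/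
noncomputable section

def stepVec (m j : ℕ) (c d : ℝ) : Fin m → ℝ := fun i => if (i : ℕ) < j then c else d

lemma psiSum_stepVec (m k j : ℕ) (c d : ℝ) (hk : k ≤ m) :
    psiSum m k (stepVec m j c d) = ((min k j : ℕ) : ℝ) * c + ((k - j : ℕ) : ℝ) * d := by
  unfold psiSum stepVec
  rw [Fin.sum_univ_eq_sum_range (fun i => if i < k then (if i < j then c else d) else 0) m]
  have hcong : ∀ i ∈ Finset.range m,
      (if i < k then (if i < j then c else d) else 0)
      = (if i < min k j then c else 0) + (if j ≤ i ∧ i < k then d else 0) := by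
    intro i _
    by_cases h1 : i < k
    · by_cases h2 : i < j
      · rw [if_pos h1, if_pos h2, if_pos (Nat.lt_min.2 ⟨h1, h2⟩), if_neg (by omega)]
        ring
      · rw [if_pos h1, if_neg h2, if_neg (by omega), if_pos ⟨by omega, h1⟩]
        ring
    · rw [if_neg h1, if_neg (by omega), if_neg (by omega)]
      ring
  rw [Finset.sum_congr rfl hcong, Finset.sum_add_distrib]
  have e1 : ∑ i ∈ Finset.range m, (if i < min k j then c else 0)
      = ((min k j : ℕ) : ℝ) * c := by
    rw [← Finset.sum_filter]
    have : (Finset.range m).filter (· < min k j) = Finset.range (min k j) := by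
      ext i; simp; omega
    rw [this, Finset.sum_const, Finset.card_range, nsmul_eq_mul]
  have e2 : ∑ i ∈ Finset.range m, (if j ≤ i ∧ i < k then d else 0)
      = ((k - j : ℕ) : ℝ) * d := by
    rw [← Finset.sum_filter]
    have : (Finset.range m).filter (fun i => j ≤ i ∧ i < k) = Finset.Ico j k := by
      ext i; simp [Finset.mem_Ico]; omega
    rw [this, Finset.sum_const, Nat.card_Ico, nsmul_eq_mul]
  rw [e1, e2]

lemma sum_stepVec (m j : ℕ) (c d : ℝ) :
    ∑ i, stepVec m j c d i = ((min m j : ℕ) : ℝ) * c + ((m - j : ℕ) : ℝ) * d := by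
  have := psiSum_stepVec m m j c d le_rfl
  rw [← this]
  unfold psiSum
  exact Finset.sum_congr rfl fun i _ => (if_pos i.isLt).symm

/-- Proposition 6.1: if `ψ̲₁,…,ψ̲_n ∈ [0,1]` satisfy `ψ̲_n ≤ n/(n+1)`,
`ψ̲_j/j ≤ ψ̲_{j+1}/(j+1)` and `(1-ψ̲_j)/(n+1-j) ≤ (1-ψ̲_{j+1})/(n-j)`, then there is
a finite nonempty subset `E` of `Δ̄⁽ⁿ⁺¹⁾` with `ψ̲_j = min ψ_j(E)` for `j = 1,…,n`. -/
theorem exists_finite_set_realizing_psi (n : ℕ) (hn : 1 ≤ n) (ψ : ℕ → ℝ)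
    (h01 : ∀ j : ℕ, 1 ≤ j → j ≤ n → 0 ≤ ψ j ∧ ψ j ≤ 1)
    (hlast : ψ n ≤ (n : ℝ) / ((n : ℝ) + 1))
    (hineq : ∀ j : ℕ, 1 ≤ j → j ≤ n - 1 →
      ψ j / (j : ℝ) ≤ ψ (j + 1) / ((j : ℝ) + 1) ∧
      (1 - ψ j) / ((n : ℝ) + 1 - (j : ℝ)) ≤ (1 - ψ (j + 1)) / ((n : ℝ) - (j : ℝ))) :
    ∃ E : Set (Fin (n + 1) → ℝ), E.Finite ∧ E.Nonempty ∧ E ⊆ DeltaBar (n + 1) ∧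
      ∀ j : ℕ, 1 ≤ j → j ≤ n → IsLeast (psiSum (n + 1) j '' E) (ψ j) := by
  -- chain inequalities
  have key : ∀ k j : ℕ, 1 ≤ k → k ≤ j → j ≤ n →
      ψ k / (k : ℝ) ≤ ψ j / (j : ℝ) ∧
      (1 - ψ k) / ((n : ℝ) + 1 - (k : ℝ)) ≤ (1 - ψ j) / ((n : ℝ) + 1 - (j : ℝ)) := by
    intro k j hk hkj hjn
    induction j, hkj using Nat.le_induction with
    | base => exact ⟨le_rfl, le_rfl⟩
    | succ j hkj ih =>
      have hj1 : 1 ≤ j := le_trans hk hkj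
      obtain ⟨h1, h2⟩ := hineq j hj1 (by omega)
      obtain ⟨ih1, ih2⟩ := ih (by omega)
      constructor
      · refine le_trans ih1 (le_trans h1 (le_of_eq ?_))
        push_cast; ring_nf
      · refine le_trans ih2 (le_trans h2 (le_of_eq ?_))
        push_cast; ring_nf
  -- the building-block vectors
  set c : ℕ → ℝ := fun j => ψ j / j with hc
  set d : ℕ → ℝ := fun j => (1 - ψ j) / ((n : ℝ) + 1 - j) with hd
  -- basic positivity facts
  have hjpos : ∀ j : ℕ, 1 ≤ j → (0 : ℝ) < j := fun j hj => by exact_mod_cast hj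
  have hdenpos : ∀ j : ℕ, j ≤ n → (0 : ℝ) < (n : ℝ) + 1 - j := by
    intro j hj
    have : (j : ℝ) ≤ n := by exact_mod_cast hj
    linarith
  have hcn : ∀ j : ℕ, 1 ≤ j → j ≤ n → c j ≤ 1 / ((n : ℝ) + 1) := by
    intro j hj hjn
    have h1 := (key j n hj hjn le_rfl).1
    have hnpos : (0 : ℝ) < n := hjpos n hn
    have h3 : ψ n * ((n : ℝ) + 1) ≤ n := (le_div_iff₀ (by linarith : (0:ℝ) < (n:ℝ)+1)).1 hlast
    have : ψ n / n ≤ 1 / ((n : ℝ) + 1) := by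
      rw [div_le_div_iff₀ hnpos (by linarith)]
      linarith
    exact le_trans h1 this
  have hc0 : ∀ j : ℕ, 1 ≤ j → j ≤ n → 0 ≤ c j := by
    intro j hj hjn
    exact div_nonneg (h01 j hj hjn).1 (le_of_lt (hjpos j hj))
  have hd1 : ∀ j : ℕ, 1 ≤ j → j ≤ n → 1 / ((n : ℝ) + 1) ≤ d j := by
    intro j hj hjn
    have hjr : (0 : ℝ) < j := hjpos j hj
    have hden := hdenpos j hjn
    have hcj := hcn j hj hjn
    have hψj : ψ j * ((n : ℝ) + 1) ≤ j := by
      rw [hc, div_le_div_iff₀ hjr (by linarith : (0:ℝ) < (n:ℝ)+1)] at hcj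
      linarith
    simp only [hd]
    rw [div_le_div_iff₀ (by linarith : (0:ℝ) < (n:ℝ)+1) hden]
    linarith
  have hcd : ∀ j : ℕ, 1 ≤ j → j ≤ n → c j ≤ d j :=
    fun j hj hjn => le_trans (hcn j hj hjn) (hd1 j hj hjn)
  -- the set E
  refine ⟨(fun j => stepVec (n + 1) j (c j) (d j)) '' (Set.Icc 1 n), ?_, ?_, ?_, ?_⟩
  · exact (Set.finite_Icc 1 n).image _
  · exact ⟨_, Set.mem_image_of_mem _ (Set.mem_Icc.2 ⟨le_rfl, hn⟩)⟩
  · rintro _ ⟨j, hj, rfl⟩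
    obtain ⟨hj1, hjn⟩ := Set.mem_Icc.1 hj
    refine ⟨?_, ?_, ?_⟩
    · intro i
      simp only [stepVec]
      split
      · exact hc0 j hj1 hjn
      · exact le_trans (by positivity) (hd1 j hj1 hjn)
    · intro i i' hii'
      simp only [stepVec]
      by_cases h2 : (i' : ℕ) < j
      · rw [if_pos h2, if_pos (lt_of_le_of_lt (by exact_mod_cast hii') h2)]
      · rw [if_neg h2]
        split
        · exact hcd j hj1 hjn
        · exact le_rfl
    · rw [sum_stepVec]
      have hmin : min (n + 1) j = j := by omega
      have hjr : (j : ℝ) ≠ 0 := ne_of_gt (hjpos j hj1)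
      have hden : (n : ℝ) + 1 - j ≠ 0 := ne_of_gt (hdenpos j hjn)
      have hcast : ((n + 1 - j : ℕ) : ℝ) = (n : ℝ) + 1 - j := by
        push_cast [Nat.cast_sub (by omega : j ≤ n + 1)]; ring
      rw [hmin, hcast]
      simp only [hc, hd]
      field_simp
      ring
  · intro k hk1 hkn
    constructor
    · refine ⟨stepVec (n + 1) k (c k) (d k),
        Set.mem_image_of_mem _ (Set.mem_Icc.2 ⟨hk1, hkn⟩), ?_⟩
      rw [psiSum_stepVec _ _ _ _ _ (by omega)]
      simp only [min_self, Nat.sub_self, Nat.cast_zero, zero_mul, add_zero]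
      simp only [hc]
      field_simp
    · rintro _ ⟨_, ⟨j, hj, rfl⟩, rfl⟩
      obtain ⟨hj1, hjn⟩ := Set.mem_Icc.1 hj
      rw [psiSum_stepVec _ _ _ _ _ (by omega)]
      by_cases hkj : k ≤ j
      · rw [min_eq_left hkj, Nat.sub_eq_zero_of_le hkj]
        simp only [Nat.cast_zero, zero_mul, add_zero]
        have := (key k j hk1 hkj hjn).1
        have hkr : (0 : ℝ) < k := hjpos k hk1
        calc ψ k = (k : ℝ) * (ψ k / k) := by field_simp
          _ ≤ (k : ℝ) * (ψ j / j) := by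
              exact mul_le_mul_of_nonneg_left this (le_of_lt hkr)
          _ = (k : ℝ) * c j := rfl
      · push_neg at hkj
        have hjk : j ≤ k := le_of_lt hkj
        rw [min_eq_right hjk]
        have hcast : ((k - j : ℕ) : ℝ) = (k : ℝ) - j := by
          push_cast [Nat.cast_sub hjk]; ring
        rw [hcast]
        have h2 := (key j k hj1 hjk hkn).2
        have hdenj := hdenpos j hjn
        have hdenk := hdenpos k hkn
        have hjc : (j : ℝ) * c j = ψ j := by simp only [hc]; field_simp
        have hdj : ((n : ℝ) + 1 - j) * d j = 1 - ψ j := by simp only [hd]; field_simp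
        rw [hjc]
        have h2' : (1 - ψ j) * ((n : ℝ) + 1 - k) ≤ (1 - ψ k) * ((n : ℝ) + 1 - j) := by
          rw [div_le_div_iff₀ hdenj hdenk] at h2
          linarith
        have hstep : ((n : ℝ) + 1 - k) * d j * ((n : ℝ) + 1 - j)
            ≤ (1 - ψ k) * ((n : ℝ) + 1 - j) := by nlinarith [hdj, h2']
        have hAB : ((n : ℝ) + 1 - k) * d j ≤ 1 - ψ k :=
          le_of_mul_le_mul_right hstep hdenj
        nlinarith [hAB, hdj]


end
end
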